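/- arXiv:2307.11596 — 2 statements merged into one kernel-verified Lean document; each statement's English description precedes it below -/
import Mathlib

section
/- Let n be a natural number and let α, β be semigroup endomorphisms of T_n. Then the following are equivalent: (i) α R* β, i.e. for all semigroup endomorphisms γ, δ of T_n: γ·α = δ·α if and only if γ·β = δ·β; (ii) α R~ β, i.e. for every idempotent semigroup endomorphism η of T_n: η·α = α if and only if η·β = β; (iii) α and β have the same rank, i.e. (Set.range α).ncard = (Set.range β).ncard. -/
/-- `s : Fin n → Fin n` is an odd permutation if it is the underlying function of some
permutation of sign `-1`. -/
def IsOddPerm {n : ℕ} (s : Fin n → Fin n) : Prop :=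
  ∃ σ : Equiv.Perm (Fin n), Equiv.Perm.sign σ = -1 ∧ ⇑σ = s

/-- `s : Fin n → Fin n` is an even permutation if it is the underlying function of some
permutation of sign `1`. -/
def IsEvenPerm {n : ℕ} (s : Fin n → Fin n) : Prop :=
  ∃ σ : Equiv.Perm (Fin n), Equiv.Perm.sign σ = 1 ∧ ⇑σ = s

/-- A pair `(t, e)` of elements of `T_n` is permissible if `t ∘ t ∘ t = t` and
`t ∘ e = e ∘ t = e ∘ e = e`. -/
def Permissible {n : ℕ} (t e : Fin n → Fin n) : Prop :=
  t ∘ t ∘ t = t ∧ t ∘ e = e ∧ e ∘ t = e ∧ e ∘ e = e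

open Classical in
/-- For a (permissible) pair `(t, e)`, the map `φ_{t,e} : T_n → T_n` sending `s` to `t` if `s`
is an odd permutation, to `t ∘ t` if `s` is an even permutation, and to `e` if `s` is not
bijective. -/
noncomputable def phi {n : ℕ} (t e : Fin n → Fin n) : (Fin n → Fin n) → (Fin n → Fin n) :=
  fun s => if IsOddPerm s then t else if IsEvenPerm s then t ∘ t else e

/-- `φ : T_n → T_n` is a semigroup endomorphism of `T_n` if `φ (s ∘ s') = φ s ∘ φ s'`
for all `s, s'`. -/
def IsEndo {n : ℕ} (φ : (Fin n → Fin n) → (Fin n → Fin n)) : Prop :=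
  ∀ s s' : Fin n → Fin n, φ (s ∘ s') = φ s ∘ φ s'

namespace Tn

open Equiv Function

variable {n : ℕ}

/-- constant map -/
def cst (a : Fin n) : Fin n → Fin n := fun _ => a

lemma comp_cst (s : Fin n → Fin n) (a : Fin n) : s ∘ cst a = cst (s a) := rfl
lemma cst_comp (s : Fin n → Fin n) (a : Fin n) : cst a ∘ s = cst a := rfl

lemma coe_comp_coe (σ τ : Perm (Fin n)) : ⇑σ ∘ ⇑τ = ⇑(σ * τ) := rfl

lemma isOdd_coe {σ : Perm (Fin n)} : IsOddPerm ⇑σ ↔ Perm.sign σ = -1 := by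
  constructor
  · rintro ⟨σ', hs, he⟩
    rwa [Equiv.coe_fn_injective he] at hs
  · intro h; exact ⟨σ, h, rfl⟩

lemma isEven_coe {σ : Perm (Fin n)} : IsEvenPerm ⇑σ ↔ Perm.sign σ = 1 := by
  constructor
  · rintro ⟨σ', hs, he⟩
    rwa [Equiv.coe_fn_injective he] at hs
  · intro h; exact ⟨σ, h, rfl⟩

lemma odd_not_even {s : Fin n → Fin n} (h : IsOddPerm s) (h' : IsEvenPerm s) : False := by
  obtain ⟨σ, hs, rfl⟩ := h
  rw [isEven_coe] at h'
  rw [h'] at hs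
  exact absurd hs (by decide)

lemma bij_iff_odd_or_even {s : Fin n → Fin n} :
    Function.Bijective s ↔ IsOddPerm s ∨ IsEvenPerm s := by
  constructor
  · intro h
    rcases Int.units_eq_one_or (Perm.sign (Equiv.ofBijective s h)) with h1 | h1
    · exact Or.inr ⟨Equiv.ofBijective s h, h1, rfl⟩
    · exact Or.inl ⟨Equiv.ofBijective s h, h1, rfl⟩
  · rintro (⟨σ, _, rfl⟩ | ⟨σ, _, rfl⟩) <;> exact σ.bijective

lemma odd_bij {s : Fin n → Fin n} (h : IsOddPerm s) : Function.Bijective s :=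
  bij_iff_odd_or_even.2 (Or.inl h)

lemma even_bij {s : Fin n → Fin n} (h : IsEvenPerm s) : Function.Bijective s :=
  bij_iff_odd_or_even.2 (Or.inr h)

lemma not_bij_comp_left {s s' : Fin n → Fin n} (h : ¬ Function.Bijective s) :
    ¬ Function.Bijective (s ∘ s') := by
  intro hb
  have hsur : Function.Surjective s := Function.Surjective.of_comp hb.2
  exact h ((Finite.surjective_iff_bijective).1 hsur)

lemma not_bij_comp_right {s s' : Fin n → Fin n} (h : ¬ Function.Bijective s') :
    ¬ Function.Bijective (s ∘ s') := by
  intro hb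
  have hinj : Function.Injective s' := Function.Injective.of_comp hb.1
  exact h ((Finite.injective_iff_bijective).1 hinj)

lemma odd_comp_odd {s s' : Fin n → Fin n} (h : IsOddPerm s) (h' : IsOddPerm s') :
    IsEvenPerm (s ∘ s') := by
  obtain ⟨σ, hs, rfl⟩ := h; obtain ⟨σ', hs', rfl⟩ := h'
  exact ⟨σ * σ', by rw [Perm.sign_mul, hs, hs']; decide, rfl⟩

lemma odd_comp_even {s s' : Fin n → Fin n} (h : IsOddPerm s) (h' : IsEvenPerm s') :
    IsOddPerm (s ∘ s') := by
  obtain ⟨σ, hs, rfl⟩ := h; obtain ⟨σ', hs', rfl⟩ := h'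
  exact ⟨σ * σ', by rw [Perm.sign_mul, hs, hs']; decide, rfl⟩

lemma even_comp_odd {s s' : Fin n → Fin n} (h : IsEvenPerm s) (h' : IsOddPerm s') :
    IsOddPerm (s ∘ s') := by
  obtain ⟨σ, hs, rfl⟩ := h; obtain ⟨σ', hs', rfl⟩ := h'
  exact ⟨σ * σ', by rw [Perm.sign_mul, hs, hs']; decide, rfl⟩

lemma even_comp_even {s s' : Fin n → Fin n} (h : IsEvenPerm s) (h' : IsEvenPerm s') :
    IsEvenPerm (s ∘ s') := by
  obtain ⟨σ, hs, rfl⟩ := h; obtain ⟨σ', hs', rfl⟩ := h'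
  exact ⟨σ * σ', by rw [Perm.sign_mul, hs, hs']; decide, rfl⟩

lemma phi_odd (t e : Fin n → Fin n) {s} (h : IsOddPerm s) : phi t e s = t := if_pos h

lemma phi_even (t e : Fin n → Fin n) {s} (h : IsEvenPerm s) : phi t e s = t ∘ t := by
  unfold phi
  rw [if_neg (fun ho => odd_not_even ho h), if_pos h]

lemma phi_sing (t e : Fin n → Fin n) {s} (h : ¬ Function.Bijective s) : phi t e s = e := by
  unfold phi
  rw [if_neg (fun ho => h (odd_bij ho)), if_neg (fun he => h (even_bij he))]

lemma phi_endo {t e : Fin n → Fin n} (h : Permissible t e) : IsEndo (phi t e) := by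
  obtain ⟨h3, hte, het, hee⟩ := h
  have h3' : ∀ x, t (t (t x)) = t x := fun x => congrFun h3 x
  have hte' : ∀ x, t (e x) = e x := fun x => congrFun hte x
  have het' : ∀ x, e (t x) = e x := fun x => congrFun het x
  have hee' : ∀ x, e (e x) = e x := fun x => congrFun hee x
  intro s s'
  by_cases ho : IsOddPerm s
  · by_cases ho' : IsOddPerm s'
    · rw [phi_odd t e ho, phi_odd t e ho',
        phi_even t e (odd_comp_odd ho ho')]
    by_cases he' : IsEvenPerm s'
    · rw [phi_odd t e ho, phi_even t e he', phi_odd t e (odd_comp_even ho he')]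
      funext x; exact (h3' x).symm
    · have hb' : ¬ Function.Bijective s' := fun hb =>
        (bij_iff_odd_or_even.1 hb).elim ho' he'
      rw [phi_odd t e ho, phi_sing t e hb', phi_sing t e (not_bij_comp_right hb')]
      exact hte.symm
  by_cases he : IsEvenPerm s
  · by_cases ho' : IsOddPerm s'
    · rw [phi_even t e he, phi_odd t e ho', phi_odd t e (even_comp_odd he ho')]
      funext x; exact (h3' x).symm
    by_cases he' : IsEvenPerm s'
    · rw [phi_even t e he, phi_even t e he', phi_even t e (even_comp_even he he')]
      funext x
      show t (t x) = t (t (t (t x)))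
      rw [h3' x]
    · have hb' : ¬ Function.Bijective s' := fun hb =>
        (bij_iff_odd_or_even.1 hb).elim ho' he'
      rw [phi_even t e he, phi_sing t e hb', phi_sing t e (not_bij_comp_right hb')]
      funext x
      show e x = t (t (e x))
      rw [hte' x, hte' x]
  · have hb : ¬ Function.Bijective s := fun hbb =>
      (bij_iff_odd_or_even.1 hbb).elim ho he
    rw [phi_sing t e hb, phi_sing t e (not_bij_comp_left hb)]
    by_cases ho' : IsOddPerm s'
    · rw [phi_odd t e ho']; exact het.symm
    by_cases he' : IsEvenPerm s'
    · rw [phi_even t e he']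
      funext x
      show e x = e (t (t x))
      rw [het' (t x), het' x]
    · have hb' : ¬ Function.Bijective s' := fun hbb =>
        (bij_iff_odd_or_even.1 hbb).elim ho' he'
      rw [phi_sing t e hb']; exact hee.symm

end Tn

namespace Tn
open Equiv Function

variable {n : ℕ}

section EndoBasic

variable {φ : (Fin n → Fin n) → (Fin n → Fin n)}

lemma endo_idcomp (hφ : IsEndo φ) (s : Fin n → Fin n) : φ id ∘ φ s = φ s := by
  have h := hφ id s
  rw [Function.id_comp] at h
  exact h.symm

lemma endo_compid (hφ : IsEndo φ) (s : Fin n → Fin n) : φ s ∘ φ id = φ s := by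
  have h := hφ s id
  rw [Function.comp_id] at h
  exact h.symm

lemma cst_collapse (hφ : IsEndo φ) (hni : ¬ Function.Injective φ) :
    ∀ u v : Fin n, φ (cst u) = φ (cst v) := by
  have hex : ∃ a b : Fin n → Fin n, φ a = φ b ∧ a ≠ b := by
    by_contra h
    push_neg at h
    exact hni fun a b hab => h a b hab
  obtain ⟨a, b, hab, hne⟩ := hex
  obtain ⟨p, hp⟩ : ∃ p, a p ≠ b p := by
    by_contra h; push_neg at h; exact hne (funext h)
  intro u v
  classical
  set s : Fin n → Fin n := fun z => if z = a p then u else if z = b p then v else z with hs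
  have h1 : s ∘ (a ∘ cst p) = cst u := by
    funext z
    show s (a p) = u
    simp [hs]
  have h2 : s ∘ (b ∘ cst p) = cst v := by
    funext z
    show s (b p) = v
    simp [hs, hp.symm]
  have e1 : φ (s ∘ (a ∘ cst p)) = φ s ∘ (φ a ∘ φ (cst p)) := by rw [hφ, hφ]
  have e2 : φ (s ∘ (b ∘ cst p)) = φ s ∘ (φ b ∘ φ (cst p)) := by rw [hφ, hφ]
  rw [h1] at e1; rw [h2] at e2
  rw [e1, e2, hab]

lemma endo_unit_mul (hφ : IsEndo φ) (σ τ : Perm (Fin n)) :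
    φ ⇑(σ * τ) = φ ⇑σ ∘ φ ⇑τ := hφ ⇑σ ⇑τ

lemma endo_unit_inv_comp (hφ : IsEndo φ) (σ : Perm (Fin n)) :
    φ ⇑σ⁻¹ ∘ φ ⇑σ = φ id := by
  rw [← endo_unit_mul hφ, inv_mul_cancel, Perm.coe_one]

lemma endo_unit_comp_inv (hφ : IsEndo φ) (σ : Perm (Fin n)) :
    φ ⇑σ ∘ φ ⇑σ⁻¹ = φ id := by
  rw [← endo_unit_mul hφ, mul_inv_cancel, Perm.coe_one]

lemma endo_K_inv (hφ : IsEndo φ) {σ : Perm (Fin n)} (hσ : φ ⇑σ = φ id) :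
    φ ⇑σ⁻¹ = φ id := by
  have h1 := endo_unit_inv_comp hφ σ
  rw [hσ] at h1
  rw [← endo_compid hφ ⇑σ⁻¹, h1]

lemma endo_K_mul (hφ : IsEndo φ) {σ τ : Perm (Fin n)} (hσ : φ ⇑σ = φ id)
    (hτ : φ ⇑τ = φ id) : φ ⇑(σ * τ) = φ id := by
  rw [endo_unit_mul hφ, hσ, hτ, endo_compid hφ]

lemma endo_K_conj (hφ : IsEndo φ) {σ : Perm (Fin n)} (τ : Perm (Fin n))
    (hσ : φ ⇑σ = φ id) : φ ⇑(τ * σ * τ⁻¹) = φ id := by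
  rw [endo_unit_mul hφ, endo_unit_mul hφ, hσ, comp_assoc, endo_idcomp hφ,
    endo_unit_comp_inv hφ]

lemma endo_unit_eq_iff (hφ : IsEndo φ) (σ τ : Perm (Fin n)) :
    φ ⇑σ = φ ⇑τ ↔ φ ⇑(σ * τ⁻¹) = φ id := by
  constructor
  · intro h
    rw [endo_unit_mul hφ, h, endo_unit_comp_inv hφ]
  · intro h
    have h2 : φ ⇑((σ * τ⁻¹) * τ) = φ ⇑(σ * τ⁻¹) ∘ φ ⇑τ := endo_unit_mul hφ _ _
    rw [h, endo_idcomp hφ, inv_mul_cancel_right] at h2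
    exact h2

end EndoBasic

lemma exists_third {a b : Fin n} (hn : 3 ≤ n) : ∃ c, c ≠ a ∧ c ≠ b := by
  classical
  by_contra h
  push_neg at h
  have hsub : (Finset.univ : Finset (Fin n)) ⊆ {a, b} := by
    intro x _
    by_cases hxa : x = a
    · simp [hxa]
    · simp [h x hxa]
  have hc := Finset.card_le_card hsub
  simp only [Finset.card_univ, Fintype.card_fin] at hc
  have h2 : ({a, b} : Finset (Fin n)).card ≤ 2 :=
    (Finset.card_insert_le _ _).trans (by simp)
  omega

theorem _root_.Equiv.Perm.inv_apply_self {α : Type*} (f : Equiv.Perm α) (x : α) : f⁻¹ (f x) = x :=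
  f.symm_apply_apply x

theorem _root_.Equiv.Perm.apply_inv_self {α : Type*} (f : Equiv.Perm α) (x : α) : f (f⁻¹ x) = x :=
  f.apply_symm_apply x

lemma exists_fifth {a b c d : Fin n} (hn : 5 ≤ n) :
    ∃ e, e ≠ a ∧ e ≠ b ∧ e ≠ c ∧ e ≠ d := by
  classical
  by_contra h
  push_neg at h
  have hsub : (Finset.univ : Finset (Fin n)) ⊆ {a, b, c, d} := by
    intro x _
    by_cases hxa : x = a
    · simp [hxa]
    by_cases hxb : x = b
    · simp [hxb]
    by_cases hxc : x = c
    · simp [hxc]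
    · simp [h x hxa hxb hxc]
  have hc := Finset.card_le_card hsub
  simp only [Finset.card_univ, Fintype.card_fin] at hc
  have h4 : ({a, b, c, d} : Finset (Fin n)).card ≤ 4 := by
    apply (Finset.card_insert_le _ _).trans
    have h3 : ({b, c, d} : Finset (Fin n)).card ≤ 3 := by
      apply (Finset.card_insert_le _ _).trans
      have h2 : ({c, d} : Finset (Fin n)).card ≤ 2 :=
        (Finset.card_insert_le _ _).trans (by simp)
      omega
    omega
  omega

lemma four_le_of_distinct {a b c d : Fin n} (hab : a ≠ b) (hac : a ≠ c) (had : a ≠ d)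
    (hbc : b ≠ c) (hbd : b ≠ d) (hcd : c ≠ d) : 4 ≤ n := by
  classical
  have hcard : ({a, b, c, d} : Finset (Fin n)).card = 4 := by
    rw [Finset.card_insert_of_notMem (by simp [hab, hac, had]),
      Finset.card_insert_of_notMem (by simp [hbc, hbd]),
      Finset.card_insert_of_notMem (by simp [hcd]), Finset.card_singleton]
  have h := Finset.card_le_card (Finset.subset_univ ({a, b, c, d} : Finset (Fin n)))
  simp only [Finset.card_univ, Fintype.card_fin] at h
  omega

lemma eq_or_eq_of_le_two (hn : n ≤ 2) {a b : Fin n} (hba : b ≠ a) (x : Fin n) :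
    x = a ∨ x = b := by
  have ha := a.2; have hb := b.2; have hx := x.2
  have hvne : b.val ≠ a.val := fun h => hba (Fin.ext h)
  have : x.val = a.val ∨ x.val = b.val := by omega
  rcases this with h | h
  · exact Or.inl (Fin.ext h)
  · exact Or.inr (Fin.ext h)

section Norm

variable (K : Perm (Fin n) → Prop)

lemma norm_caseA
    (Kone : K 1) (Kmul : ∀ {σ τ}, K σ → K τ → K (σ * τ))
    (Kinv : ∀ {σ}, K σ → K σ⁻¹) (Kconj : ∀ σ (τ : Perm (Fin n)), K σ → K (τ * σ * τ⁻¹))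
    (htr : ∃ (σ : Perm (Fin n)) (a : Fin n), K σ ∧ σ a ≠ a ∧ σ (σ a) ≠ a) :
    ∀ σ : Perm (Fin n), Perm.sign σ = 1 → K σ := by
  classical
  obtain ⟨σ, a, hKσ, hab, h2⟩ := htr
  set b := σ a with hb
  set c := σ b with hc
  have hba : b ≠ a := hab
  have hcb : c ≠ b := by
    intro h
    have hfix : σ b = b := by rw [← hc, h]
    have hba2 : b = a := σ.injective (by rw [hfix, ← hb])
    exact hba hba2
  have hca : c ≠ a := h2
  have hcomm : K (Equiv.swap a b * σ * (Equiv.swap a b)⁻¹ * σ⁻¹) :=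
    Kmul (Kconj σ (Equiv.swap a b) hKσ) (Kinv hKσ)
  have h1 : σ * Equiv.swap a b * σ⁻¹ = Equiv.swap b c := by
    rw [← Equiv.swap_apply_apply σ a b, ← hb, ← hc]
  have hval : Equiv.swap a b * σ * (Equiv.swap a b)⁻¹ * σ⁻¹
      = Equiv.swap a b * Equiv.swap b c := by
    rw [← h1, Equiv.swap_inv]
    group
  rw [hval] at hcomm
  have h3 : (Equiv.swap a b * Equiv.swap b c).IsThreeCycle := by
    rw [Equiv.swap_comm a b]
    exact Equiv.Perm.isThreeCycle_swap_mul_swap_same hba (Ne.symm hcb) (Ne.symm hca)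
  set Ksub : Subgroup (Perm (Fin n)) :=
    { carrier := {τ | K τ}
      mul_mem' := fun hx hy => Kmul hx hy
      one_mem' := Kone
      inv_mem' := fun hx => Kinv hx } with hKsub
  have hle : alternatingGroup (Fin n) ≤ Ksub := by
    rw [← Equiv.Perm.closure_three_cycles_eq_alternating]
    apply (Subgroup.closure_le _).2
    intro τ hτ
    have hconj : IsConj (Equiv.swap a b * Equiv.swap b c) τ := by
      rw [Equiv.Perm.isConj_iff_cycleType_eq, h3, hτ]
    obtain ⟨g, hg⟩ := isConj_iff.1 hconj
    have hK2 : K (g * (Equiv.swap a b * Equiv.swap b c) * g⁻¹) := Kconj _ g hcomm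
    rw [hg] at hK2
    exact hK2
  intro τ hτ
  exact hle (Equiv.Perm.mem_alternatingGroup.2 hτ)

lemma fpf_conj4 (σ τ : Perm (Fin 4)) (hσ : σ * σ = 1 ∧ ∀ x, σ x ≠ x)
    (hτ : τ * τ = 1 ∧ ∀ x, τ x ≠ x) : ∃ g : Perm (Fin 4), g * σ * g⁻¹ = τ := by
  revert σ τ
  decide

lemma norm_classify
    (Kone : K 1) (Kmul : ∀ {σ τ}, K σ → K τ → K (σ * τ))
    (Kinv : ∀ {σ}, K σ → K σ⁻¹) (Kconj : ∀ σ (τ : Perm (Fin n)), K σ → K (τ * σ * τ⁻¹))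
    (hex : ∃ σ, K σ ∧ σ ≠ 1) :
    (∀ σ : Perm (Fin n), Perm.sign σ = 1 → K σ) ∨
      (n = 4 ∧ ∀ σ, K σ ↔ σ = 1 ∨ (σ * σ = 1 ∧ ∀ x, σ x ≠ x)) := by
  classical
  by_cases htr : ∃ (σ : Perm (Fin n)) (a : Fin n), K σ ∧ σ a ≠ a ∧ σ (σ a) ≠ a
  · exact Or.inl (norm_caseA K Kone @Kmul @Kinv Kconj htr)
  push_neg at htr
  have hinv : ∀ σ, K σ → ∀ x, σ (σ x) = x := by
    intro σ hσ x
    by_cases h : σ x = x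
    · rw [h, h]
    · exact htr σ x hσ h
  have hfpf : ∀ σ, K σ → σ ≠ 1 → ∀ x, σ x ≠ x := by
    intro σ hσ hne c hcfix
    obtain ⟨a, ha⟩ : ∃ a, σ a ≠ a := by
      by_contra h; push_neg at h; exact hne (Equiv.ext h)
    set b := σ a with hb
    have hba : b ≠ a := ha
    have hca : c ≠ a := by
      intro h
      apply ha
      rw [hb, ← h]
      exact hcfix
    have hσb : σ b = a := by rw [hb, hinv σ hσ]
    have hcb : c ≠ b := by
      intro h
      rw [h] at hcfix
      rw [hσb] at hcfix
      exact hba hcfix.symm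
    have hcomm : K (Equiv.swap b c * σ * (Equiv.swap b c)⁻¹ * σ⁻¹) :=
      Kmul (Kconj σ (Equiv.swap b c) hσ) (Kinv hσ)
    have h1 : σ * Equiv.swap b c * σ⁻¹ = Equiv.swap a c := by
      rw [← Equiv.swap_apply_apply σ b c, hσb, hcfix]
    have hval : Equiv.swap b c * σ * (Equiv.swap b c)⁻¹ * σ⁻¹
        = Equiv.swap b c * Equiv.swap a c := by
      rw [← h1, Equiv.swap_inv]
      group
    rw [hval] at hcomm
    set u := Equiv.swap b c * Equiv.swap a c with hu
    have h1u : u a = b := by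
      rw [hu]
      simp only [Perm.mul_apply]
      rw [Equiv.swap_apply_left, Equiv.swap_apply_right]
    have h2u : u b = c := by
      rw [hu]
      simp only [Perm.mul_apply]
      rw [Equiv.swap_apply_of_ne_of_ne hba (Ne.symm hcb), Equiv.swap_apply_left]
    have hua : u a ≠ a := by rw [h1u]; exact hba
    have huua : u (u a) ≠ a := by rw [h1u, h2u]; exact hca
    exact huua (htr u a hcomm hua)
  obtain ⟨σ₀, hσ₀K, hσ₀ne⟩ := hex
  by_cases hn2 : n ≤ 2
  · left
    intro σ hsign
    have hσ1 : σ = 1 := by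
      by_contra hne
      obtain ⟨a, ha⟩ : ∃ a, σ a ≠ a := by
        by_contra h; push_neg at h; exact hne (Equiv.ext h)
      set b := σ a with hb
      have hba : b ≠ a := ha
      have hσswap : σ = Equiv.swap a b := by
        apply Equiv.ext
        intro x
        rcases eq_or_eq_of_le_two hn2 hba x with rfl | rfl
        · rw [Equiv.swap_apply_left, hb]
        · rw [Equiv.swap_apply_right]
          have hσb : σ b ≠ b := fun h => hba (σ.injective (h.trans hb))
          rcases eq_or_eq_of_le_two hn2 hba (σ b) with h | h
          · exact h
          · exact absurd h hσb
      rw [hσswap, Equiv.Perm.sign_swap hba.symm] at hsign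
      exact absurd hsign (by decide)
    rw [hσ1]; exact Kone
  · -- n ≥ 3 ; derive n = 4 and K = V
    push_neg at hn2
    have hn3 : 3 ≤ n := hn2
    right
    obtain ⟨a, ha⟩ : ∃ a, σ₀ a ≠ a := by
      by_contra h; push_neg at h; exact hσ₀ne (Equiv.ext h)
    set b := σ₀ a with hb
    have hba : b ≠ a := ha
    obtain ⟨c, hca, hcb⟩ := exists_third (a := a) (b := b) hn3
    set d := σ₀ c with hd
    have hσ₀b : σ₀ b = a := by rw [hb, hinv σ₀ hσ₀K]
    have hσ₀fpf : ∀ x, σ₀ x ≠ x := hfpf σ₀ hσ₀K hσ₀ne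
    have hdc : d ≠ c := hσ₀fpf c
    have hda : d ≠ a := by
      intro h
      have : σ₀ d = c := by rw [hd, hinv σ₀ hσ₀K]
      rw [h] at this
      rw [← hb] at this
      exact hcb this.symm
    have hdb : d ≠ b := by
      intro h
      have : σ₀ d = c := by rw [hd, hinv σ₀ hσ₀K]
      rw [h, hσ₀b] at this
      exact hca this.symm
    have hcomm : K (Equiv.swap b c * σ₀ * (Equiv.swap b c)⁻¹ * σ₀⁻¹) :=
      Kmul (Kconj σ₀ (Equiv.swap b c) hσ₀K) (Kinv hσ₀K)
    have h1 : σ₀ * Equiv.swap b c * σ₀⁻¹ = Equiv.swap a d := by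
      rw [← Equiv.swap_apply_apply σ₀ b c, hσ₀b, ← hd]
    have hval : Equiv.swap b c * σ₀ * (Equiv.swap b c)⁻¹ * σ₀⁻¹
        = Equiv.swap b c * Equiv.swap a d := by
      rw [← h1, Equiv.swap_inv]
      group
    rw [hval] at hcomm
    set u := Equiv.swap b c * Equiv.swap a d with hu
    have hub : u b = c := by
      rw [hu]
      simp only [Perm.mul_apply]
      rw [Equiv.swap_apply_of_ne_of_ne hba hdb.symm, Equiv.swap_apply_left]
    have hune : u ≠ 1 := by
      intro h
      have : u b = b := by rw [h]; rfl
      rw [hub] at this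
      exact hcb this
    have hufpf : ∀ x, u x ≠ x := hfpf u hcomm hune
    have hn4 : n = 4 := by
      have hge : 4 ≤ n :=
        four_le_of_distinct hba.symm hca.symm hda.symm (Ne.symm hcb) (Ne.symm hdb) (Ne.symm hdc)
      by_contra hne4
      have hn5 : 5 ≤ n := by omega
      obtain ⟨e, hea, heb, hec, hed⟩ := exists_fifth (a := a) (b := b) (c := c) (d := d) hn5
      have : u e = e := by
        rw [hu]
        simp only [Perm.mul_apply]
        rw [Equiv.swap_apply_of_ne_of_ne hea hed, Equiv.swap_apply_of_ne_of_ne heb hec]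
      exact hufpf e this
    refine ⟨hn4, ?_⟩
    intro σ
    constructor
    · intro hσ
      by_cases h1 : σ = 1
      · exact Or.inl h1
      · refine Or.inr ⟨Equiv.ext fun x => ?_, hfpf σ hσ h1⟩
        rw [Perm.mul_apply, hinv σ hσ x]
        rfl
    · rintro (rfl | hσfpf)
      · exact Kone
      · -- conjugate σ₀ to σ
        subst hn4
        have hσ₀p : σ₀ * σ₀ = 1 ∧ ∀ x, σ₀ x ≠ x := by
          refine ⟨Equiv.ext fun x => ?_, hσ₀fpf⟩
          rw [Perm.mul_apply, hinv σ₀ hσ₀K x]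
          rfl
        obtain ⟨g, hg⟩ := fpf_conj4 σ₀ σ hσ₀p hσfpf
        have := Kconj σ₀ g hσ₀K
        rw [hg] at this
        exact this

end Norm

section Count

variable {φ : (Fin n → Fin n) → (Fin n → Fin n)}

lemma endo_perm_fix_cst (hφ : IsEndo φ) (hcol : ∀ u v : Fin n, φ (cst u) = φ (cst v))
    (σ : Perm (Fin n)) (u : Fin n) : φ ⇑σ ∘ φ (cst u) = φ (cst u) := by
  have h := hφ ⇑σ (cst u)
  have h2 : ⇑σ ∘ cst u = cst (σ u) := rfl
  rw [h2] at h
  rw [← h]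
  exact hcol _ _

lemma endo_fix_aux (hφ : IsEndo φ) (hcol : ∀ u v : Fin n, φ (cst u) = φ (cst v))
    (z0 : Fin n) :
    ∃ q : Fin n,
      (∀ σ : Perm (Fin n), φ ⇑σ q = q) ∧ φ id q = q ∧ q = φ (cst z0) z0 ∧
      (∀ T : Finset (Perm (Fin n)),
        (∀ σ ∈ T, ∀ τ ∈ T, φ ⇑σ = φ ⇑τ → σ = τ) →
        T.card ≤ (Fintype.card {x : Fin n // φ id x = x ∧ x ≠ φ (cst z0) z0}).factorial) := by
  classical
  set E := φ (cst z0) with hE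
  set q := E z0 with hq
  have hfixE : ∀ σ : Perm (Fin n), φ ⇑σ ∘ E = E := by
    intro σ
    have h := hφ ⇑σ (cst z0)
    have h2 : ⇑σ ∘ cst z0 = cst (σ z0) := rfl
    rw [h2] at h
    rw [← h, hE]
    exact hcol _ _
  have hqfix : ∀ σ : Perm (Fin n), φ ⇑σ q = q := fun σ => congrFun (hfixE σ) z0
  have hf_abs : ∀ s x, φ id (φ s x) = φ s x := fun s x => congrFun (endo_idcomp hφ s) x
  have hfq : φ id q = q := hf_abs (cst z0) z0
  have h_compid : ∀ s x, φ s (φ id x) = φ s x := fun s x => congrFun (endo_compid hφ s) x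
  have hcancel : ∀ (σ : Perm (Fin n)) x, φ ⇑σ⁻¹ (φ ⇑σ x) = φ id x :=
    fun σ x => congrFun (endo_unit_inv_comp hφ σ) x
  have hcancel' : ∀ (σ : Perm (Fin n)) x, φ ⇑σ (φ ⇑σ⁻¹ x) = φ id x :=
    fun σ x => congrFun (endo_unit_comp_inv hφ σ) x
  refine ⟨q, hqfix, hfq, rfl, ?_⟩
  set S := {x : Fin n // φ id x = x ∧ x ≠ q} with hS
  have toSmem : ∀ (σ : Perm (Fin n)) (x : S), φ id (φ ⇑σ x.1) = φ ⇑σ x.1 ∧ φ ⇑σ x.1 ≠ q := by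
    intro σ x
    refine ⟨hf_abs _ _, fun hq' => x.2.2 ?_⟩
    have h1 : φ ⇑σ⁻¹ (φ ⇑σ x.1) = φ id x.1 := hcancel σ x.1
    rw [hq', hqfix σ⁻¹, x.2.1] at h1
    exact h1.symm
  set permS : Perm (Fin n) → Perm S := fun σ =>
    { toFun := fun x => ⟨φ ⇑σ x.1, toSmem σ x⟩
      invFun := fun x => ⟨φ ⇑σ⁻¹ x.1, toSmem σ⁻¹ x⟩
      left_inv := fun x => Subtype.ext (by
        show φ ⇑σ⁻¹ (φ ⇑σ x.1) = x.1
        rw [hcancel σ x.1, x.2.1])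
      right_inv := fun x => Subtype.ext (by
        show φ ⇑σ (φ ⇑σ⁻¹ x.1) = x.1
        rw [hcancel' σ x.1, x.2.1]) } with hpermS
  have key : ∀ σ τ : Perm (Fin n), permS σ = permS τ → φ ⇑σ = φ ⇑τ := by
    intro σ τ h
    funext x
    have hx : φ ⇑σ x = φ ⇑σ (φ id x) := (h_compid _ x).symm
    have hx' : φ ⇑τ x = φ ⇑τ (φ id x) := (h_compid _ x).symm
    have hyfix : φ id (φ id x) = φ id x := hf_abs id x
    by_cases hyq : φ id x = q
    · rw [hx, hx', hyq, hqfix σ, hqfix τ]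
    · have h2 := congr_arg (fun (p : Perm S) => (p ⟨φ id x, hyfix, hyq⟩).1) h
      simp only [hpermS] at h2
      rw [hx, hx']
      exact h2
  intro T hT
  have hinj : Set.InjOn permS ↑T := fun σ hσ τ hτ h => hT σ hσ τ hτ (key σ τ h)
  have hmaps : ∀ σ ∈ T, permS σ ∈ (Finset.univ : Finset (Perm S)) :=
    fun σ _ => Finset.mem_univ _
  have hcard := Finset.card_le_card_of_injOn permS hmaps hinj
  rw [Finset.card_univ, Fintype.card_perm] at hcard
  exact hcard

lemma caseB (hφ : IsEndo φ) (hn : 2 ≤ n)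
    (hcol : ∀ u v : Fin n, φ (cst u) = φ (cst v))
    (hKtriv : ∀ σ : Perm (Fin n), φ ⇑σ = φ id → σ = 1) : False := by
  classical
  obtain ⟨q, hqfix, hfq, -, hbound⟩ := endo_fix_aux hφ hcol ⟨0, by omega⟩
  have hT : ∀ σ ∈ (Finset.univ : Finset (Perm (Fin n))),
      ∀ τ ∈ (Finset.univ : Finset (Perm (Fin n))), φ ⇑σ = φ ⇑τ → σ = τ := by
    intro σ _ τ _ h
    have h2 := (endo_unit_eq_iff hφ σ τ).1 h
    have h3 := hKtriv _ h2
    have h4 : σ = τ := by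
      have := mul_inv_eq_one.1 h3
      exact this
    exact h4
  have hb := hbound Finset.univ hT
  rw [Finset.card_univ, Fintype.card_perm, Fintype.card_fin] at hb
  set q' := φ (cst (⟨0, by omega⟩ : Fin n)) ⟨0, by omega⟩ with hq'
  have hinj2 : Function.Injective
      (fun x : {x : Fin n // φ id x = x ∧ x ≠ q'} => (⟨x.1, x.2.2⟩ : {x : Fin n // x ≠ q'})) :=
    by
    intro a b h
    have h2 : (a.1 : Fin n) = b.1 := congrArg (fun y : {x : Fin n // x ≠ q'} => y.1) h
    exact Subtype.ext h2
  have hcard2 := Fintype.card_le_of_injective _ hinj2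
  have hcard3 : Fintype.card {x : Fin n // x ≠ q'} = n - 1 := by
    rw [Fintype.card_subtype_compl, Fintype.card_subtype_eq, Fintype.card_fin]
  rw [hcard3] at hcard2
  have hle : Fintype.card {x : Fin n // φ id x = x ∧ x ≠ q'} ≤ n - 1 := hcard2
  have hfac : (Fintype.card {x : Fin n // φ id x = x ∧ x ≠ q'}).factorial ≤ (n-1).factorial :=
    Nat.factorial_le hle
  have hlt : (n - 1).factorial < n.factorial := by
    have h0 : 0 < n - 1 := by omega
    have := (Nat.factorial_lt h0).2 (show n - 1 < n by omega)
    exact this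
  omega

end Count

section Eps

open Classical in
noncomputable def eps (u v : Fin n) : Fin n → Fin n := fun z => if z = u then v else z

lemma eps_apply_self (u v : Fin n) : eps u v u = v := by simp [eps]

lemma eps_apply_ne (u v : Fin n) {z : Fin n} (h : z ≠ u) : eps u v z = z := by
  simp [eps, h]

lemma eps_idem (u v : Fin n) : eps u v ∘ eps u v = eps u v := by
  funext z
  show eps u v (eps u v z) = eps u v z
  by_cases h : z = u
  · rw [h, eps_apply_self]
    by_cases hvu : v = u
    · rw [hvu]
      exact eps_apply_self u u
    · exact eps_apply_ne u v hvu
  · rw [eps_apply_ne u v h, eps_apply_ne u v h]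

lemma eps_not_bij {u v : Fin n} (h : u ≠ v) : ¬ Function.Bijective (eps u v) := by
  intro hb
  have h1 : eps u v u = eps u v v := by
    rw [eps_apply_self, eps_apply_ne u v (Ne.symm h)]
  exact h (hb.1 h1)

lemma comp_eps_of_eq {s : Fin n → Fin n} {u v : Fin n} (h : s u = s v) :
    s ∘ eps u v = s := by
  funext z
  show s (eps u v z) = s z
  by_cases hz : z = u
  · rw [hz, eps_apply_self, h]
  · rw [eps_apply_ne u v hz]

lemma eps_comp_of_notmem {s : Fin n → Fin n} {u v : Fin n} (h : ∀ z, s z ≠ u) :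
    eps u v ∘ s = s := by
  funext z
  show eps u v (s z) = s z
  rw [eps_apply_ne u v (h z)]

lemma conj_eps (σ : Perm (Fin n)) (u v : Fin n) :
    ⇑σ ∘ (eps u v ∘ ⇑σ⁻¹) = eps (σ u) (σ v) := by
  funext z
  show σ (eps u v (σ⁻¹ z)) = eps (σ u) (σ v) z
  by_cases h : z = σ u
  · subst h
    rw [Perm.inv_apply_self, eps_apply_self, eps_apply_self]
  · have h2 : σ⁻¹ z ≠ u := fun hh => h (by rw [← hh, Perm.apply_inv_self])
    rw [eps_apply_ne u v h2, eps_apply_ne _ _ h, Perm.apply_inv_self]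

end Eps

lemma exists_fourth {a b c : Fin n} (hn : 4 ≤ n) : ∃ d, d ≠ a ∧ d ≠ b ∧ d ≠ c := by
  classical
  by_contra h
  push_neg at h
  have hsub : (Finset.univ : Finset (Fin n)) ⊆ {a, b, c} := by
    intro x _
    by_cases hxa : x = a
    · simp [hxa]
    by_cases hxb : x = b
    · simp [hxb]
    · simp [h x hxa hxb]
  have hc := Finset.card_le_card hsub
  simp only [Finset.card_univ, Fintype.card_fin] at hc
  have h3 : ({a, b, c} : Finset (Fin n)).card ≤ 3 := by
    apply (Finset.card_insert_le _ _).trans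
    have h2 : ({b, c} : Finset (Fin n)).card ≤ 2 :=
      (Finset.card_insert_le _ _).trans (by simp)
    omega
  omega

section CaseA

variable {φ : (Fin n → Fin n) → (Fin n → Fin n)}

/-- all eps collapse to the constants' common image implies all singular maps collapse -/
lemma sing_collapse (hφ : IsEndo φ) (c0 : Fin n)
    (hcol : ∀ u v : Fin n, φ (cst u) = φ (cst v))
    (heps : ∀ u v : Fin n, u ≠ v → φ (eps u v) = φ (cst c0)) :
    ∀ s, ¬ Function.Bijective s → φ s = φ (cst c0) := by
  intro s hs
  have hni : ¬ Function.Injective s := fun hi => hs ((Finite.injective_iff_bijective).1 hi)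
  obtain ⟨u, v, hsv, huv⟩ := Function.not_injective_iff.1 hni
  have h1 : s ∘ eps u v = s := comp_eps_of_eq hsv
  have h2 : φ s = φ s ∘ φ (eps u v) := by rw [← hφ, h1]
  rw [heps u v huv] at h2
  have h3 : φ s ∘ φ (cst c0) = φ (cst c0) := by
    have h4 := hφ s (cst c0)
    have h5 : s ∘ cst c0 = cst (s c0) := rfl
    rw [h5] at h4
    rw [← h4, hcol]
  rw [h3] at h2
  exact h2

/-- the collapsing-chain: build a map sending everything in A to w out of eps's -/
lemma collapse_chain (hφ : IsEndo φ) {x : Fin n → Fin n}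
    (hxall : ∀ u v : Fin n, u ≠ v → φ (eps u v) = x)
    (hxx : x ∘ x = x) (w : Fin n) :
    ∀ (A : Finset (Fin n)), w ∉ A →
      ∃ s : Fin n → Fin n, (∀ a ∈ A, s a = w) ∧ (∀ z, z ∉ A → s z = z) ∧
        (A.Nonempty → φ s = x) := by
  classical
  intro A
  induction A using Finset.induction_on with
  | empty =>
    intro _
    exact ⟨id, fun a ha => absurd ha (Finset.notMem_empty a), fun z _ => rfl,
      fun h => absurd h (by simp [Finset.not_nonempty_empty])⟩
  | @insert a A' ha ih =>
    intro hw
    have hwa : w ∉ A' := fun h => hw (Finset.mem_insert_of_mem h)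
    have haw : a ≠ w := fun h => hw (h ▸ Finset.mem_insert_self a A')
    obtain ⟨s', h1, h2, h3⟩ := ih hwa
    refine ⟨s' ∘ eps a w, ?_, ?_, ?_⟩
    · intro b hb
      rcases Finset.mem_insert.1 hb with rfl | hb'
      · show s' (eps b w b) = w
        rw [eps_apply_self]
        exact h2 w hwa
      · show s' (eps a w b) = w
        rw [eps_apply_ne a w (fun h => ha (h ▸ hb'))]
        exact h1 b hb'
    · intro z hz
      have hza : z ≠ a := fun h => hz (h ▸ Finset.mem_insert_self a A')
      have hzA : z ∉ A' := fun h => hz (Finset.mem_insert_of_mem h)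
      show s' (eps a w z) = z
      rw [eps_apply_ne a w hza]
      exact h2 z hzA
    · intro _
      have hcomp : φ (s' ∘ eps a w) = φ s' ∘ φ (eps a w) := hφ _ _
      rw [hxall a w haw] at hcomp
      rcases A'.eq_empty_or_nonempty with rfl | hA'
      · have hs'id : s' = id := by
          funext z
          exact h2 z (Finset.notMem_empty z)
        rw [hs'id, Function.id_comp]
        exact hxall a w haw
      · rw [h3 hA'] at hcomp
        rw [hcomp, hxx]

lemma caseA (hφ : IsEndo φ) (hn : 2 ≤ n)
    (hcol : ∀ u v : Fin n, φ (cst u) = φ (cst v))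
    (hKA : ∀ σ : Perm (Fin n), Perm.sign σ = 1 → φ ⇑σ = φ id) :
    ∃ t e, Permissible t e ∧ φ = phi t e := by
  classical
  set z0 : Fin n := ⟨0, by omega⟩ with hz0
  set z1 : Fin n := ⟨1, by omega⟩ with hz1
  have hz01 : z0 ≠ z1 := by
    intro h
    have := congrArg Fin.val h
    simp [hz0, hz1] at this
  set τ : Perm (Fin n) := Equiv.swap z0 z1 with hτ
  set t := φ ⇑τ with ht
  set E := φ (cst z0) with hE
  have hsignτ : Perm.sign τ = -1 := Equiv.Perm.sign_swap hz01
  have hodd : ∀ σ : Perm (Fin n), Perm.sign σ = -1 → φ ⇑σ = t := by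
    intro σ hσ
    have h1 : σ = (σ * τ⁻¹) * τ := by group
    have h2 : Perm.sign (σ * τ⁻¹) = 1 := by
      rw [Perm.sign_mul, hσ, Perm.sign_inv, hsignτ]
      decide
    calc φ ⇑σ = φ ⇑((σ * τ⁻¹) * τ) := by rw [← h1]
    _ = φ ⇑(σ * τ⁻¹) ∘ φ ⇑τ := endo_unit_mul hφ _ _
    _ = φ id ∘ φ ⇑τ := by rw [hKA _ h2]
    _ = t := by rw [endo_idcomp hφ]
  have hff : t ∘ t = φ id := by
    rw [ht, ← endo_unit_mul hφ]
    have : τ * τ = 1 := by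
      rw [hτ, Equiv.swap_mul_self]
    rw [this, Perm.coe_one]
  -- conjugation invariance of eps images under even permutations
  have hconj : ∀ (σ : Perm (Fin n)), Perm.sign σ = 1 →
      ∀ u v : Fin n, φ (eps (σ u) (σ v)) = φ (eps u v) := by
    intro σ hσ u v
    have h1 : eps (σ u) (σ v) = ⇑σ ∘ (eps u v ∘ ⇑σ⁻¹) := (conj_eps σ u v).symm
    have hσi : Perm.sign σ⁻¹ = 1 := by rw [Perm.sign_inv, hσ]
    rw [h1, hφ, hφ, hKA σ hσ, hKA σ⁻¹ hσi, endo_compid hφ, endo_idcomp hφ]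
  -- step 1 : x_{u,v} = x_{v,w} for distinct u v w
  have hstep1 : ∀ u v w : Fin n, u ≠ v → v ≠ w → u ≠ w →
      φ (eps u v) = φ (eps v w) := by
    intro u v w huv hvw huw
    set σ : Perm (Fin n) := Equiv.swap u v * Equiv.swap v w with hσ
    have hσu : σ u = v := by
      rw [hσ]
      simp only [Perm.mul_apply]
      rw [Equiv.swap_apply_of_ne_of_ne huv huw, Equiv.swap_apply_left]
    have hσv : σ v = w := by
      rw [hσ]
      simp only [Perm.mul_apply]
      rw [Equiv.swap_apply_left, Equiv.swap_apply_of_ne_of_ne (Ne.symm huw) (Ne.symm hvw)]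
    have hσsign : Perm.sign σ = 1 := by
      rw [hσ, Perm.sign_mul, Equiv.Perm.sign_swap huv, Equiv.Perm.sign_swap hvw]
      decide
    have := hconj σ hσsign u v
    rw [hσu, hσv] at this
    exact this.symm
  -- all eps collapse to E
  have heps : ∀ u v : Fin n, u ≠ v → φ (eps u v) = E := by
    rcases Nat.lt_or_ge n 3 with hn3 | hn3
    · -- n = 2 : eps u v is the constant v
      intro u v huv
      have h2 : n ≤ 2 := by omega
      have hepscst : eps u v = cst v := by
        funext z
        rcases eq_or_eq_of_le_two h2 (Ne.symm huv) z with h | h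
        · rw [h, eps_apply_self]; rfl
        · rw [h, eps_apply_ne u v (Ne.symm huv)]; rfl
      rw [hepscst, hE]
      exact hcol _ _
    rcases Nat.lt_or_ge n 4 with hn4 | hn4
    · -- n = 3 : per-pair chain
      intro u v huv
      obtain ⟨w, hwu, hwv⟩ := exists_third (a := u) (b := v) hn3
      have hx1 : φ (eps u v) = φ (eps v w) := hstep1 u v w huv (Ne.symm hwv) (Ne.symm hwu)
      have hchain : eps v w ∘ eps u v = cst w := by
        funext z
        show eps v w (eps u v z) = w
        by_cases hz : z = u
        · rw [hz, eps_apply_self, eps_apply_self]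
        by_cases hz2 : z = v
        · rw [hz2, eps_apply_ne u v (Ne.symm huv), eps_apply_self]
        by_cases hz3 : z = w
        · rw [hz3, eps_apply_ne u v (fun h => hwu h), eps_apply_ne v w (fun h => hwv h)]
        · exfalso
          have h4 := four_le_of_distinct hz hz2 hz3 huv
            (fun h => hwu h.symm) (fun h => hwv h.symm)
          omega
      have hphi : φ (cst w) = φ (eps v w) ∘ φ (eps u v) := by rw [← hφ, hchain]
      rw [← hx1] at hphi
      have hx2 : φ (eps u v) ∘ φ (eps u v) = φ (eps u v) := by
        rw [← hφ, eps_idem]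
      rw [hx2] at hphi
      rw [hE, hcol z0 w, hphi]
    · -- n ≥ 4 : all eps values equal, then collapse chain
      have hxall : ∀ u v : Fin n, u ≠ v → φ (eps u v) = φ (eps z0 z1) := by
        intro u v huv
        -- build an even permutation sending z0 to u and z1 to v
        set τ₁ : Perm (Fin n) := Equiv.swap z0 u with hτ₁
        have hτ₁z0 : τ₁ z0 = u := Equiv.swap_apply_left _ _
        set v₁ := τ₁ z1 with hv₁
        have hv₁u : v₁ ≠ u := by
          rw [hv₁, ← hτ₁z0]
          intro h
          exact hz01 (τ₁.injective h).symm
        set τ₂ : Perm (Fin n) := Equiv.swap v₁ v with hτ₂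
        have hτ₂u : τ₂ u = u := by
          rw [hτ₂]
          apply Equiv.swap_apply_of_ne_of_ne (Ne.symm hv₁u) huv
        set σ' := τ₂ * τ₁ with hσ'
        have hσ'z0 : σ' z0 = u := by rw [hσ', Perm.mul_apply, hτ₁z0, hτ₂u]
        have hσ'z1 : σ' z1 = v := by
          rw [hσ', Perm.mul_apply, ← hv₁, hτ₂, Equiv.swap_apply_left]
        rcases eq_or_ne (Perm.sign σ') 1 with hsg | hsg
        · have := hconj σ' hsg z0 z1
          rw [hσ'z0, hσ'z1] at this
          exact this
        · -- fix parity with a swap of two points outside {z0, z1}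
          obtain ⟨c, hcz0, hcz1⟩ := exists_third (a := z0) (b := z1) (by omega)
          obtain ⟨d, hdz0, hdz1, hdc⟩ := exists_fourth (a := z0) (b := z1) (c := c) hn4
          set σ := σ' * Equiv.swap c d with hσd
          have hσz0 : σ z0 = u := by
            rw [hσd, Perm.mul_apply,
              Equiv.swap_apply_of_ne_of_ne (fun h => hcz0 h.symm) (fun h => hdz0 h.symm)]
            exact hσ'z0
          have hσz1 : σ z1 = v := by
            rw [hσd, Perm.mul_apply]
            rw [Equiv.swap_apply_of_ne_of_ne (fun h => hcz1 h.symm) (fun h => hdz1 h.symm)]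
            exact hσ'z1
          have hsg2 : Perm.sign σ = 1 := by
            have hs'sign : Perm.sign σ' = -1 := by
              rcases Int.units_eq_one_or (Perm.sign σ') with h | h
              · exact absurd h hsg
              · exact h
            rw [hσd, Perm.sign_mul, hs'sign,
              Equiv.Perm.sign_swap (fun h : c = d => hdc h.symm)]
            decide
          have := hconj σ hsg2 z0 z1
          rw [hσz0, hσz1] at this
          exact this
      have hxx : φ (eps z0 z1) ∘ φ (eps z0 z1) = φ (eps z0 z1) := by
        rw [← hφ, eps_idem]
      intro u v huv
      obtain ⟨s, hs1, hs2, hs3⟩ := collapse_chain hφ hxall hxx z0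
        (Finset.univ.erase z0) (by simp)
      have hscst : s = cst z0 := by
        funext z
        by_cases hz : z = z0
        · rw [hz]
          exact hs2 z0 (by simp)
        · exact hs1 z (by simp [hz])
      have hne : (Finset.univ.erase z0).Nonempty := ⟨z1, by simp [Ne.symm hz01]⟩
      have hEx : E = φ (eps z0 z1) := by
        rw [hE, ← hscst, hs3 hne]
      rw [hxall u v huv, ← hEx]
  -- singular collapse
  have hsing : ∀ s, ¬ Function.Bijective s → φ s = E := by
    have h := sing_collapse hφ z0 hcol (fun u v huv => heps u v huv)
    exact h
  -- conclusion
  refine ⟨t, E, ?_, ?_⟩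
  · refine ⟨?_, ?_, ?_, ?_⟩
    · show t ∘ (t ∘ t) = t
      rw [hff, endo_compid hφ]
    · rw [ht, hE, ← hφ]
      have h1 : ⇑τ ∘ cst z0 = cst (τ z0) := rfl
      rw [h1]
      exact hcol _ _
    · rw [ht, hE, ← hφ]
      have h1 : cst z0 ∘ ⇑τ = cst z0 := rfl
      rw [h1]
    · rw [hE, ← hφ]
      have h1 : cst z0 ∘ cst z0 = cst z0 := rfl
      rw [h1]
  · funext s
    by_cases ho : IsOddPerm s
    · rw [phi_odd t E ho]
      obtain ⟨σ, hσ, rfl⟩ := ho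
      exact hodd σ hσ
    by_cases he : IsEvenPerm s
    · rw [phi_even t E he, hff]
      obtain ⟨σ, hσ, rfl⟩ := he
      exact hKA σ hσ
    · have hb : ¬ Function.Bijective s := fun hb =>
        (bij_iff_odd_or_even.1 hb).elim ho he
      rw [phi_sing t E hb]
      exact hsing s hb

end CaseA

section CaseC

/-- fixed-point-free involution ("V-element") -/
def FPF (σ : Perm (Fin 4)) : Prop := σ * σ = 1 ∧ ∀ x, σ x ≠ x

instance : DecidablePred FPF := fun σ => by unfold FPF; infer_instance

lemma fin4_exhaust {q r a b : Fin 4} (hqr : q ≠ r) (hqa : q ≠ a) (hqb : q ≠ b)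
    (hra : r ≠ a) (hrb : r ≠ b) (hab : a ≠ b) (x : Fin 4) :
    x = q ∨ x = r ∨ x = a ∨ x = b := by
  have h1 : q.val ≠ r.val := fun h => hqr (Fin.ext h)
  have h2 : q.val ≠ a.val := fun h => hqa (Fin.ext h)
  have h3 : q.val ≠ b.val := fun h => hqb (Fin.ext h)
  have h4 : r.val ≠ a.val := fun h => hra (Fin.ext h)
  have h5 : r.val ≠ b.val := fun h => hrb (Fin.ext h)
  have h6 : a.val ≠ b.val := fun h => hab (Fin.ext h)
  have hq := q.2; have hr := r.2; have ha := a.2; have hb := b.2; have hx := x.2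
  have : x.val = q.val ∨ x.val = r.val ∨ x.val = a.val ∨ x.val = b.val := by omega
  rcases this with h | h | h | h
  · exact Or.inl (Fin.ext h)
  · exact Or.inr (Or.inl (Fin.ext h))
  · exact Or.inr (Or.inr (Or.inl (Fin.ext h)))
  · exact Or.inr (Or.inr (Or.inr (Fin.ext h)))

/-- six explicit pairwise non-V-equivalent permutations -/
def T6 : Finset (Perm (Fin 4)) :=
  {1, Equiv.swap 0 1, Equiv.swap 0 2, Equiv.swap 1 2,
    Equiv.swap 0 1 * Equiv.swap 0 2, Equiv.swap 0 2 * Equiv.swap 0 1}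

lemma T6_card : T6.card = 6 := by decide

lemma T6_sep : ∀ σ ∈ T6, ∀ τ ∈ T6,
    (σ * τ⁻¹ = 1 ∨ FPF (σ * τ⁻¹)) → σ = τ := by decide

lemma stab_card : ∀ u : Fin 4,
    (Finset.univ.filter (fun g : Perm (Fin 4) => g u = u)).card = 6 := by decide

lemma stabfun_card : ∀ q : Fin 4,
    (Finset.univ.filter
      (fun h : Fin 4 → Fin 4 => Function.Bijective h ∧ h q = q)).card = 6 := by decide

lemma zeta_notV : ¬ ((Equiv.swap 0 1 * Equiv.swap 1 2 : Perm (Fin 4)) = 1 ∨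
    FPF (Equiv.swap 0 1 * Equiv.swap 1 2)) := by decide

lemma zeta2_notV : ¬ (((Equiv.swap 0 1 * Equiv.swap 1 2) * (Equiv.swap 0 1 * Equiv.swap 1 2)
      : Perm (Fin 4)) = 1 ∨
    FPF ((Equiv.swap 0 1 * Equiv.swap 1 2) * (Equiv.swap 0 1 * Equiv.swap 1 2))) := by decide

variable {φ : (Fin 4 → Fin 4) → (Fin 4 → Fin 4)}

lemma caseC (hφ : IsEndo φ)
    (hcol : ∀ u v : Fin 4, φ (cst u) = φ (cst v))
    (hKV : ∀ σ : Perm (Fin 4), φ ⇑σ = φ id ↔ (σ = 1 ∨ FPF σ)) :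
    ∃ q : Fin 4,
      (∀ s, ¬ Function.Bijective s → φ s = cst q) ∧
      (∀ σ : Perm (Fin 4), Function.Bijective (φ ⇑σ) ∧ φ ⇑σ q = q) ∧
      (∀ σ τ : Perm (Fin 4), φ ⇑σ = φ ⇑τ ↔ (σ * τ⁻¹ = 1 ∨ FPF (σ * τ⁻¹))) ∧
      (∀ g : Fin 4 → Fin 4, (Function.Bijective g ∧ g q = q) ↔ ∃ σ : Perm (Fin 4), φ ⇑σ = g) := by
  classical
  obtain ⟨q, hqfix, hfq, hqdef, hbound⟩ := endo_fix_aux hφ hcol (0 : Fin 4)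
  -- fibers of φ on units
  have hfib : ∀ σ τ : Perm (Fin 4), φ ⇑σ = φ ⇑τ ↔ (σ * τ⁻¹ = 1 ∨ FPF (σ * τ⁻¹)) := by
    intro σ τ
    rw [endo_unit_eq_iff hφ, hKV]
  -- distinctness of the six images
  have hTdist : ∀ σ ∈ T6, ∀ τ ∈ T6, φ ⇑σ = φ ⇑τ → σ = τ := by
    intro σ hσ τ hτ h
    exact T6_sep σ hσ τ hτ ((hfib σ τ).1 h)
  have hb := hbound T6 hTdist
  rw [T6_card] at hb
  -- the fixed-point set minus q has exactly 3 elements, hence φ id = id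
  set S := {x : Fin 4 // φ id x = x ∧ x ≠ φ (cst 0) 0} with hS
  have hcard3 : Fintype.card {x : Fin 4 // x ≠ φ (cst 0) 0} = 3 := by
    rw [Fintype.card_subtype_compl, Fintype.card_subtype_eq, Fintype.card_fin]
  have hinj2 : Function.Injective
      (fun x : S => (⟨x.1, x.2.2⟩ : {x : Fin 4 // x ≠ φ (cst 0) 0})) := by
    intro a b h
    have h2 : (a.1 : Fin 4) = b.1 := congrArg (fun y : {x : Fin 4 // x ≠ φ (cst 0) 0} => y.1) h
    exact Subtype.ext h2
  have hcard2 := Fintype.card_le_of_injective _ hinj2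
  rw [hcard3] at hcard2
  have hScard : Fintype.card S = 3 := by
    have h03 : Fintype.card S = 0 ∨ Fintype.card S = 1 ∨ Fintype.card S = 2 ∨
        Fintype.card S = 3 := by omega
    rcases h03 with h | h | h | h
    · rw [h] at hb; norm_num [Nat.factorial] at hb
    · rw [h] at hb; norm_num [Nat.factorial] at hb
    · rw [h] at hb; norm_num [Nat.factorial] at hb
    · exact h
  have hfid : φ id = id := by
    have hbijS : Function.Bijective
        (fun x : S => (⟨x.1, x.2.2⟩ : {x : Fin 4 // x ≠ φ (cst 0) 0})) := by
      rw [Fintype.bijective_iff_injective_and_card]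
      exact ⟨hinj2, by rw [hScard, hcard3]⟩
    funext x
    by_cases hxq : x = φ (cst 0) 0
    · rw [hxq]
      rw [hqdef] at hfq
      exact hfq
    · obtain ⟨y, hy⟩ := hbijS.2 ⟨x, hxq⟩
      have h2 : (y.1 : Fin 4) = x := congrArg (fun z : {x : Fin 4 // x ≠ φ (cst 0) 0} => z.1) hy
      rw [← h2]
      exact y.2.1
  -- units are bijective
  have hbij : ∀ σ : Perm (Fin 4), Function.Bijective (φ ⇑σ) := by
    intro σ
    have h1 := endo_unit_inv_comp hφ σ
    have h2 := endo_unit_comp_inv hφ σ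
    rw [hfid] at h1 h2
    constructor
    · exact Function.LeftInverse.injective (g := φ ⇑σ⁻¹) (fun x => congrFun h1 x)
    · exact Function.RightInverse.surjective (g := φ ⇑σ⁻¹) (fun x => congrFun h2 x)
  have hqfix' : ∀ σ : Perm (Fin 4), φ ⇑σ q = q := hqfix
  -- image of each point stabilizer is exactly the bijections fixing q
  have himg : ∀ u : Fin 4,
      (Finset.univ.filter (fun g : Perm (Fin 4) => g u = u)).image (fun g : Perm (Fin 4) => φ ⇑g)
        = Finset.univ.filter (fun h : Fin 4 → Fin 4 => Function.Bijective h ∧ h q = q) := by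
    intro u
    apply Finset.eq_of_subset_of_card_le
    · intro h hh
      obtain ⟨g, hg, rfl⟩ := Finset.mem_image.1 hh
      exact Finset.mem_filter.2 ⟨Finset.mem_univ _, hbij g, hqfix g⟩
    · rw [stabfun_card q]
      have hinjim : Set.InjOn (fun g : Perm (Fin 4) => φ ⇑g)
          ↑(Finset.univ.filter (fun g : Perm (Fin 4) => g u = u)) := by
        intro g hg g' hg' h
        have hgu : g u = u := (Finset.mem_filter.1 hg).2
        have hgu' : g' u = u := (Finset.mem_filter.1 hg').2
        rcases (hfib g g').1 h with h1 | h1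
        · exact mul_inv_eq_one.1 h1
        · exfalso
          apply h1.2 u
          have hginv : g'⁻¹ u = u := by
            have h2 := congrArg (fun z => g'⁻¹ z) hgu'
            simp only [Perm.inv_apply_self] at h2
            exact h2.symm
          rw [Perm.mul_apply, hginv, hgu]
      rw [Finset.card_image_of_injOn hinjim, stab_card u]
  -- E is the constant function at q
  have hfixEpt : ∀ (σ : Perm (Fin 4)) z, φ ⇑σ (φ (cst 0) z) = φ (cst 0) z :=
    fun σ z => congrFun (endo_perm_fix_cst hφ hcol σ 0) z
  have hEcst : φ (cst 0) = cst q := by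
    funext z
    show φ (cst 0) z = q
    by_contra hrq
    set r := φ (cst 0) z with hr
    have hrfix : ∀ σ : Perm (Fin 4), φ ⇑σ r = r := fun σ => hfixEpt σ z
    obtain ⟨a, haq, har⟩ := exists_third (a := q) (b := r) (by omega)
    obtain ⟨b, hbq, hbr, hba⟩ := exists_fourth (a := q) (b := r) (c := a) (by omega)
    set ζ : Perm (Fin 4) := Equiv.swap 0 1 * Equiv.swap 1 2 with hζ
    have hexh := fin4_exhaust (q := q) (r := r) (a := a) (b := b)
      (fun h => hrq h.symm) (Ne.symm haq) (Ne.symm hbq) (Ne.symm har)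
      (Ne.symm hbr) (Ne.symm hba)
    have hζq : φ ⇑ζ q = q := hqfix ζ
    have hζr : φ ⇑ζ r = r := hrfix ζ
    have hinjζ := (hbij ζ).1
    have hζa : φ ⇑ζ a = a ∨ φ ⇑ζ a = b := by
      rcases hexh (φ ⇑ζ a) with h | h | h | h
      · exact absurd (hinjζ (h.trans hζq.symm)) haq
      · exact absurd (hinjζ (h.trans hζr.symm)) har
      · exact Or.inl h
      · exact Or.inr h
    rcases hζa with hca | hcb
    · have hζb : φ ⇑ζ b = b := by
        rcases hexh (φ ⇑ζ b) with h | h | h | h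
        · exact absurd (hinjζ (h.trans hζq.symm)) hbq
        · exact absurd (hinjζ (h.trans hζr.symm)) hbr
        · exact absurd (hinjζ (h.trans hca.symm)) hba
        · exact h
      have hζid : φ ⇑ζ = φ id := by
        rw [hfid]
        funext x
        rcases hexh x with rfl | rfl | rfl | rfl
        · exact hζq
        · exact hζr
        · exact hca
        · exact hζb
      exact zeta_notV ((hKV ζ).1 hζid)
    · have hζb : φ ⇑ζ b = a := by
        rcases hexh (φ ⇑ζ b) with h | h | h | h
        · exact absurd (hinjζ (h.trans hζq.symm)) hbq
        · exact absurd (hinjζ (h.trans hζr.symm)) hbr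
        · exact h
        · exact absurd (hinjζ (h.trans hcb.symm)) hba
      have hζ2 : φ ⇑(ζ * ζ) = φ id := by
        rw [endo_unit_mul hφ, hfid]
        funext x
        show φ ⇑ζ (φ ⇑ζ x) = x
        rcases hexh x with rfl | rfl | rfl | rfl
        · rw [hζq, hζq]
        · rw [hζr, hζr]
        · rw [hcb, hζb]
        · rw [hζb, hcb]
      exact zeta2_notV ((hKV (ζ * ζ)).1 hζ2)
  have hcstq : ∀ u : Fin 4, φ (cst u) = cst q := fun u => (hcol u 0).trans hEcst
  -- all the eps collapse to cst q
  have heps : ∀ u v : Fin 4, u ≠ v → φ (eps u v) = φ (cst 0) := by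
    intro u v huv
    rw [hEcst]
    set x := φ (eps u v) with hx
    have hxx : ∀ z, x (x z) = x z := by
      intro z
      have h := hφ (eps u v) (eps u v)
      rw [eps_idem] at h
      exact (congrFun h z).symm
    have hxq : x q = q := by
      have h := hφ (eps u v) (cst u)
      have h2 : eps u v ∘ cst u = cst v := funext fun w => eps_apply_self u v
      rw [h2, hcstq v, hcstq u] at h
      exact (congrFun h q).symm
    have hrel : ∀ g : Perm (Fin 4), g u = u → ∀ z, x (φ ⇑g (x z)) = φ ⇑g (x z) := by
      intro g hgu z
      have hginv : g⁻¹ u = u := by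
        have h3 : g⁻¹ (g u) = g⁻¹ u := congrArg _ hgu
        rw [Perm.inv_apply_self] at h3
        exact h3.symm
      have hnotu : ∀ w, (⇑g ∘ eps u v) w ≠ u := by
        intro w hw
        have h4 := congrArg (fun y => g⁻¹ y) hw
        simp only [comp_apply, Perm.inv_apply_self] at h4
        rw [hginv] at h4
        by_cases hwu : w = u
        · rw [hwu, eps_apply_self] at h4; exact huv h4.symm
        · rw [eps_apply_ne u v hwu] at h4; exact hwu h4
      have h1 : eps u v ∘ (⇑g ∘ eps u v) = ⇑g ∘ eps u v := eps_comp_of_notmem hnotu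
      have h2 := congrArg φ h1
      rw [hφ, hφ] at h2
      exact congrFun h2 z
    by_cases hallq : ∀ z, x z = q
    · funext z; exact hallq z
    · exfalso
      push_neg at hallq
      obtain ⟨z₀, hz₀⟩ := hallq
      set p := x z₀ with hp
      have hpfix : x p = p := hxx z₀
      have hpq : p ≠ q := hz₀
      have hRall : ∀ r : Fin 4, r ≠ q → x r = r := by
        intro r hrq
        by_cases hrp : r = p
        · rw [hrp]; exact hpfix
        have hmem : ⇑(Equiv.swap p r) ∈ Finset.univ.filter
            (fun h : Fin 4 → Fin 4 => Function.Bijective h ∧ h q = q) := by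
          refine Finset.mem_filter.2 ⟨Finset.mem_univ _, (Equiv.swap p r).bijective, ?_⟩
          exact Equiv.swap_apply_of_ne_of_ne (fun h => hpq h.symm) (fun h => hrq h.symm)
        rw [← himg u] at hmem
        obtain ⟨g, hgmem, hgval⟩ := Finset.mem_image.1 hmem
        have hgu : g u = u := (Finset.mem_filter.1 hgmem).2
        have hgp : φ ⇑g p = r := by
          rw [hgval]
          exact Equiv.swap_apply_left p r
        have h5 := hrel g hgu z₀
        rw [← hp, hgp] at h5
        exact h5
      have hxid : x = id := by
        funext w
        by_cases hwq : w = q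
        · rw [hwq, hxq]; rfl
        · rw [hRall w hwq]; rfl
      have hswaprel : x ∘ φ ⇑(Equiv.swap u v) = x := by
        have h1 : eps u v ∘ ⇑(Equiv.swap u v) = eps u v := by
          funext w
          show eps u v (Equiv.swap u v w) = eps u v w
          by_cases hwu : w = u
          · rw [hwu, Equiv.swap_apply_left, eps_apply_ne u v (Ne.symm huv),
              eps_apply_self]
          by_cases hwv : w = v
          · rw [hwv, Equiv.swap_apply_right, eps_apply_self,
              eps_apply_ne u v (Ne.symm huv)]
          · rw [Equiv.swap_apply_of_ne_of_ne hwu hwv]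
        have h2 := congrArg φ h1
        rw [hφ] at h2
        exact h2
      rw [hxid, Function.id_comp] at hswaprel
      have hsw : φ ⇑(Equiv.swap u v) = φ id := by
        rw [hfid]
        exact hswaprel
      rcases (hKV _).1 hsw with h1 | h1
      · apply huv
        have h2 := congrArg (fun p : Perm (Fin 4) => p u) h1
        simpa [Equiv.swap_apply_left] using h2.symm
      · obtain ⟨w, hwu, hwv⟩ := exists_third (a := u) (b := v) (by omega)
        exact h1.2 w (Equiv.swap_apply_of_ne_of_ne hwu hwv)
  have hsing : ∀ s, ¬ Function.Bijective s → φ s = cst q := by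
    intro s hs
    have h := sing_collapse hφ 0 hcol heps s hs
    rw [hEcst] at h
    exact h
  refine ⟨q, hsing, fun σ => ⟨hbij σ, hqfix σ⟩, hfib, ?_⟩
  intro g
  constructor
  · rintro ⟨hgb, hgq⟩
    have hmem : g ∈ Finset.univ.filter
        (fun h : Fin 4 → Fin 4 => Function.Bijective h ∧ h q = q) :=
      Finset.mem_filter.2 ⟨Finset.mem_univ _, hgb, hgq⟩
    rw [← himg 0] at hmem
    obtain ⟨σ, _, hσ⟩ := Finset.mem_image.1 hmem
    exact ⟨σ, hσ⟩
  · rintro ⟨σ, rfl⟩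
    exact ⟨hbij σ, hqfix σ⟩

end CaseC

section Classify

variable {φ : (Fin n → Fin n) → (Fin n → Fin n)}

lemma classify (hn : 2 ≤ n) (hφ : IsEndo φ) (hni : ¬ Function.Injective φ) :
    (∃ t e, Permissible t e ∧ φ = phi t e) ∨
      (n = 4 ∧ ∀ σ : Perm (Fin n),
        φ ⇑σ = φ id ↔ (σ = 1 ∨ (σ * σ = 1 ∧ ∀ x, σ x ≠ x))) := by
  classical
  have hcol := cst_collapse hφ hni
  by_cases hK : ∀ σ : Perm (Fin n), φ ⇑σ = φ id → σ = 1
  · exact (caseB hφ hn hcol hK).elim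
  · push_neg at hK
    obtain ⟨σ₁, hσ₁, hσ₁ne⟩ := hK
    set K : Perm (Fin n) → Prop := fun σ => φ ⇑σ = φ id with hKdef
    have Kone : K 1 := by
      show φ ⇑(1 : Perm (Fin n)) = φ id
      rw [Perm.coe_one]
    rcases norm_classify K Kone (fun hσ hτ => endo_K_mul hφ hσ hτ)
      (fun hσ => endo_K_inv hφ hσ) (fun σ τ hσ => endo_K_conj hφ τ hσ)
      ⟨σ₁, hσ₁, hσ₁ne⟩ with hA | ⟨hn4, hKV⟩
    · exact Or.inl (caseA hφ hn hcol hA)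
    · exact Or.inr ⟨hn4, hKV⟩

end Classify

section Rank

lemma not_bij_cst (hn : 2 ≤ n) (a : Fin n) : ¬ Function.Bijective (cst a) := by
  intro hb
  have h : cst a ⟨0, by omega⟩ = cst a ⟨1, by omega⟩ := rfl
  have h2 := hb.1 h
  have h3 := congrArg Fin.val h2
  simp at h3

lemma isOdd_swap01 (hn : 2 ≤ n) :
    IsOddPerm (⇑(Equiv.swap (⟨0, by omega⟩ : Fin n) ⟨1, by omega⟩)) := by
  refine ⟨_, ?_, rfl⟩
  apply Equiv.Perm.sign_swap
  intro h
  have h3 := congrArg Fin.val h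
  simp at h3

lemma isEven_id : IsEvenPerm (id : Fin n → Fin n) :=
  ⟨1, Equiv.Perm.sign_one, rfl⟩

lemma phi_range (hn : 2 ≤ n) (t e : Fin n → Fin n) :
    Set.range (phi t e) = {t, t ∘ t, e} := by
  ext y
  constructor
  · rintro ⟨s, rfl⟩
    by_cases ho : IsOddPerm s
    · rw [phi_odd t e ho]; left; rfl
    by_cases he : IsEvenPerm s
    · rw [phi_even t e he]; right; left; rfl
    · have hb : ¬ Function.Bijective s := fun hb =>
        (bij_iff_odd_or_even.1 hb).elim ho he
      rw [phi_sing t e hb]; right; right; rfl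
  · rintro (h | h | h)
    · exact ⟨_, (phi_odd t e (isOdd_swap01 hn)).trans h.symm⟩
    · exact ⟨id, (phi_even t e isEven_id).trans h.symm⟩
    · exact ⟨cst ⟨0, by omega⟩, (phi_sing t e (not_bij_cst hn _)).trans h.symm⟩

lemma phi_rank1 (hn : 2 ≤ n) {t e : Fin n → Fin n} (h1 : t ∘ t = t) (h2 : e = t) :
    (Set.range (phi t e)).ncard = 1 := by
  rw [phi_range hn, h1, h2]
  simp [Set.ncard_singleton, Set.insert_eq_self.2]

lemma phi_rank2 (hn : 2 ≤ n) {t e : Fin n → Fin n} (h1 : t ∘ t = t) (h2 : e ≠ t) :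
    (Set.range (phi t e)).ncard = 2 := by
  rw [phi_range hn, h1]
  have : ({t, t, e} : Set (Fin n → Fin n)) = {t, e} := by
    simp
  rw [this, Set.ncard_pair (Ne.symm h2)]

lemma perm_rank3_distinct {t e : Fin n → Fin n} (hP : Permissible t e)
    (h1 : t ∘ t ≠ t) : t ≠ e ∧ t ∘ t ≠ e := by
  obtain ⟨h3, hte, het, hee⟩ := hP
  constructor
  · intro h
    apply h1
    calc t ∘ t = t ∘ e := by rw [h]
    _ = e := hte
    _ = t := h.symm
  · intro h
    apply h1
    have h4 : t ∘ (t ∘ t) = t := h3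
    rw [h] at h4
    rw [hte] at h4
    rw [h, h4]

lemma phi_rank3 (hn : 2 ≤ n) {t e : Fin n → Fin n} (hP : Permissible t e)
    (h1 : t ∘ t ≠ t) : (Set.range (phi t e)).ncard = 3 := by
  obtain ⟨hte, htte⟩ := perm_rank3_distinct hP h1
  rw [phi_range hn]
  rw [Set.ncard_insert_of_notMem (by
    intro h
    rcases h with h | h
    · exact h1 h.symm
    · exact hte h)]
  rw [Set.ncard_pair htte]

lemma rank_perm_cases {t e : Fin n → Fin n} (hP : Permissible t e) :
    (t ∘ t = t ∧ e = t) ∨ (t ∘ t = t ∧ e ≠ t) ∨ t ∘ t ≠ t := by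
  by_cases h1 : t ∘ t = t
  · by_cases h2 : e = t
    · exact Or.inl ⟨h1, h2⟩
    · exact Or.inr (Or.inl ⟨h1, h2⟩)
  · exact Or.inr (Or.inr h1)

lemma rank_inj {α : (Fin n → Fin n) → (Fin n → Fin n)} (hi : Function.Injective α) :
    (Set.range α).ncard = n ^ n := by
  have hsur : Function.Surjective α := Finite.surjective_of_injective hi
  have : Set.range α = Set.univ := Set.range_eq_univ.2 hsur
  rw [this, Set.ncard_univ, Nat.card_eq_fintype_card]
  rw [Fintype.card_fun, Fintype.card_fin]

lemma nn_ge4 (hn : 2 ≤ n) : 4 ≤ n ^ n := by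
  calc (4 : ℕ) = 2 ^ 2 := rfl
  _ ≤ n ^ 2 := Nat.pow_le_pow_left hn 2
  _ ≤ n ^ n := Nat.pow_le_pow_right (by omega) hn

end Rank

section Fibers

variable {t e : Fin n → Fin n}

lemma phi_bij_val (h1 : t ∘ t = t) {x} (hx : Function.Bijective x) :
    phi t e x = t := by
  rcases bij_iff_odd_or_even.1 hx with ho | he
  · exact phi_odd t e ho
  · rw [phi_even t e he, h1]

lemma phi_const (h1 : t ∘ t = t) (h2 : e = t) (x : Fin n → Fin n) :
    phi t e x = t := by
  by_cases hx : Function.Bijective x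
  · exact phi_bij_val h1 hx
  · rw [phi_sing t e hx, h2]

lemma phi2_fiber (h1 : t ∘ t = t) (h2 : e ≠ t) (x y : Fin n → Fin n) :
    phi t e x = phi t e y ↔ (Function.Bijective x ↔ Function.Bijective y) := by
  by_cases hx : Function.Bijective x <;> by_cases hy : Function.Bijective y
  · rw [phi_bij_val h1 hx, phi_bij_val h1 hy]
    exact iff_of_true rfl ⟨fun _ => hy, fun _ => hx⟩
  · rw [phi_bij_val h1 hx, phi_sing t e hy]
    constructor
    · intro h; exact (h2 h.symm).elim
    · intro h; exact (hy (h.mp hx)).elim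
  · rw [phi_sing t e hx, phi_bij_val h1 hy]
    constructor
    · intro h; exact (h2 h).elim
    · intro h; exact (hx (h.mpr hy)).elim
  · rw [phi_sing t e hx, phi_sing t e hy]
    exact iff_of_true rfl ⟨fun h => (hx h).elim, fun h => (hy h).elim⟩

lemma phi3_fiber (hP : Permissible t e) (h1 : t ∘ t ≠ t) (x y : Fin n → Fin n) :
    phi t e x = phi t e y ↔
      ((IsOddPerm x ↔ IsOddPerm y) ∧ (IsEvenPerm x ↔ IsEvenPerm y)) := by
  obtain ⟨hte, htte⟩ := perm_rank3_distinct hP h1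
  have hvals : ∀ z : Fin n → Fin n,
      (IsOddPerm z ∧ phi t e z = t) ∨
      (¬ IsOddPerm z ∧ IsEvenPerm z ∧ phi t e z = t ∘ t) ∨
      (¬ IsOddPerm z ∧ ¬ IsEvenPerm z ∧ phi t e z = e) := by
    intro z
    by_cases ho : IsOddPerm z
    · exact Or.inl ⟨ho, phi_odd t e ho⟩
    by_cases he : IsEvenPerm z
    · exact Or.inr (Or.inl ⟨ho, he, phi_even t e he⟩)
    · have hb : ¬ Function.Bijective z := fun hb =>
        (bij_iff_odd_or_even.1 hb).elim ho he
      exact Or.inr (Or.inr ⟨ho, he, phi_sing t e hb⟩)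
  rcases hvals x with ⟨hox, hx⟩ | ⟨hox, hex, hx⟩ | ⟨hox, hex, hx⟩ <;>
    rcases hvals y with ⟨hoy, hy⟩ | ⟨hoy, hey, hy⟩ | ⟨hoy, hey, hy⟩ <;>
    rw [hx, hy]
  · exact iff_of_true rfl ⟨⟨fun _ => hoy, fun _ => hox⟩,
      ⟨fun h => (odd_not_even hox h).elim, fun h => (odd_not_even hoy h).elim⟩⟩
  · constructor
    · intro h; exact (h1 h.symm).elim
    · rintro ⟨h, -⟩; exact (hoy (h.mp hox)).elim
  · constructor
    · intro h; exact (hte h).elim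
    · rintro ⟨h, -⟩; exact (hoy (h.mp hox)).elim
  · constructor
    · intro h; exact (h1 h).elim
    · rintro ⟨h, -⟩; exact (hox (h.mpr hoy)).elim
  · exact iff_of_true rfl ⟨⟨fun h => (hox h).elim, fun h => (hoy h).elim⟩,
      ⟨fun _ => hey, fun _ => hex⟩⟩
  · constructor
    · intro h; exact (htte h).elim
    · rintro ⟨-, h⟩; exact (hey (h.mp hex)).elim
  · constructor
    · intro h; exact (hte h.symm).elim
    · rintro ⟨h, -⟩; exact (hox (h.mpr hoy)).elim
  · constructor
    · intro h; exact (htte h.symm).elim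
    · rintro ⟨-, h⟩; exact (hex (h.mpr hey)).elim
  · exact iff_of_true rfl ⟨⟨fun h => (hox h).elim, fun h => (hoy h).elim⟩,
      ⟨fun h => (hex h).elim, fun h => (hey h).elim⟩⟩

end Fibers

section Etas

/-- η₁ : constant endomorphism at the identity -/
lemma eta1_endo : IsEndo (fun _ : Fin n → Fin n => (id : Fin n → Fin n)) :=
  fun _ _ => rfl

lemma eta1_idem :
    (fun x : Fin n → Fin n => (fun _ : Fin n → Fin n => (id : Fin n → Fin n))
      ((fun _ : Fin n → Fin n => (id : Fin n → Fin n)) x))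
    = (fun _ : Fin n → Fin n => (id : Fin n → Fin n)) := rfl

open Classical in
/-- η₂ : bijections to the identity, the rest to a constant -/
noncomputable def eta2 (a : Fin n) : (Fin n → Fin n) → (Fin n → Fin n) :=
  fun s => if Function.Bijective s then id else cst a

lemma eta2_bij (a : Fin n) {s : Fin n → Fin n} (h : Function.Bijective s) :
    eta2 a s = id := if_pos h

lemma eta2_sing (a : Fin n) {s : Fin n → Fin n} (h : ¬ Function.Bijective s) :
    eta2 a s = cst a := if_neg h

lemma eta2_endo (a : Fin n) : IsEndo (eta2 a) := by
  intro s s'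
  by_cases hs : Function.Bijective s <;> by_cases hs' : Function.Bijective s'
  · rw [eta2_bij a hs, eta2_bij a hs', eta2_bij a (Function.Bijective.comp hs hs')]
    rfl
  · rw [eta2_bij a hs, eta2_sing a hs', eta2_sing a (not_bij_comp_right hs')]
    rfl
  · rw [eta2_sing a hs, eta2_bij a hs', eta2_sing a (not_bij_comp_left hs)]
    rfl
  · rw [eta2_sing a hs, eta2_sing a hs', eta2_sing a (not_bij_comp_left hs)]
    rfl

lemma eta2_idem (hn : 2 ≤ n) (a : Fin n) :
    (fun x => eta2 a (eta2 a x)) = eta2 a := by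
  funext s
  by_cases hs : Function.Bijective s
  · rw [eta2_bij a hs]
    exact eta2_bij a Function.bijective_id
  · rw [eta2_sing a hs]
    exact eta2_sing a (not_bij_cst hn a)

/-- η₃ : the phi-endomorphism attached to a transposition and a constant idempotent -/
lemma eta3_perm {z0 z1 z2 : Fin n} (h01 : z0 ≠ z1) (h02 : z0 ≠ z2) (h12 : z1 ≠ z2) :
    Permissible (⇑(Equiv.swap z0 z1)) (cst z2) := by
  refine ⟨?_, ?_, ?_, ?_⟩
  · funext x
    show Equiv.swap z0 z1 (Equiv.swap z0 z1 (Equiv.swap z0 z1 x)) = Equiv.swap z0 z1 x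
    rw [Equiv.swap_apply_self]
  · funext x
    show Equiv.swap z0 z1 z2 = z2
    exact Equiv.swap_apply_of_ne_of_ne (Ne.symm h02) (Ne.symm h12)
  · rfl
  · rfl

lemma phi_idem_of {t e : Fin n → Fin n} (ho : IsOddPerm t)
    (he : ¬ Function.Bijective e) :
    (fun x => phi t e (phi t e x)) = phi t e := by
  funext s
  by_cases hos : IsOddPerm s
  · rw [phi_odd t e hos, phi_odd t e ho]
  by_cases hes : IsEvenPerm s
  · rw [phi_even t e hes, phi_even t e (odd_comp_odd ho ho)]
  · have hb : ¬ Function.Bijective s := fun hb =>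
      (bij_iff_odd_or_even.1 hb).elim hos hes
    rw [phi_sing t e hb, phi_sing t e he]

/-- η₃ fixes every phi-endomorphism -/
lemma eta3_fixes_phi {t e : Fin n → Fin n} (hP : Permissible t e)
    {z0 z1 z2 : Fin n} (h01 : z0 ≠ z1) :
    (fun x => phi t e (phi (⇑(Equiv.swap z0 z1)) (cst z2) x)) = phi t e := by
  set t3 : Fin n → Fin n := ⇑(Equiv.swap z0 z1) with ht3
  have hot3 : IsOddPerm t3 := ⟨_, Equiv.Perm.sign_swap h01, rfl⟩
  funext s
  by_cases hos : IsOddPerm s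
  · rw [phi_odd _ _ hos, phi_odd t e hot3, phi_odd t e hos]
  by_cases hes : IsEvenPerm s
  · rw [phi_even _ _ hes, phi_even t e hes]
    have hid : t3 ∘ t3 = id := by
      funext x
      show Equiv.swap z0 z1 (Equiv.swap z0 z1 x) = x
      rw [Equiv.swap_apply_self]
    rw [hid]
    rw [phi_even t e isEven_id]
  · have hb : ¬ Function.Bijective s := fun hb =>
      (bij_iff_odd_or_even.1 hb).elim hos hes
    rw [phi_sing _ _ hb, phi_sing t e hb]
    by_cases hcb : Function.Bijective (cst z2 : Fin n → Fin n)
    · exfalso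
      have h2 : 2 ≤ n := by
        by_contra h
        push_neg at h
        have h1 := z0.2; have h2 := z1.2
        have : z0 = z1 := Fin.ext (by omega)
        exact h01 this
      exact not_bij_cst h2 z2 hcb
    · rw [phi_sing t e hcb]

/-- "same phi fibers" condition for rank-3 case -/
def C3 (x y : Fin n → Fin n) : Prop :=
  (IsOddPerm x ↔ IsOddPerm y) ∧ (IsEvenPerm x ↔ IsEvenPerm y)

end Etas

section Eta4

def vnu : Fin 4 → Perm (Fin 4) := fun a =>
  if a = 0 then Equiv.swap 0 3 * Equiv.swap 1 2
  else if a = 1 then Equiv.swap 1 3 * Equiv.swap 0 2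
  else if a = 2 then Equiv.swap 2 3 * Equiv.swap 0 1
  else 1

lemma vnu_3 : ∀ a, vnu a 3 = a := by decide
lemma vnu_V : ∀ a, vnu a = 1 ∨ FPF (vnu a) := by decide
lemma vnu_at3 : vnu 3 = 1 := by decide
lemma V_unique : ∀ v w : Perm (Fin 4), (v = 1 ∨ FPF v) → (w = 1 ∨ FPF w) →
    v 3 = w 3 → v = w := by decide
set_option maxRecDepth 100000 in
lemma V_mul : ∀ v w : Perm (Fin 4), (v = 1 ∨ FPF v) → (w = 1 ∨ FPF w) →
    (v * w = 1 ∨ FPF (v * w)) := by decide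

lemma V_conj (v g : Perm (Fin 4)) (h : v = 1 ∨ FPF v) :
    (g * v * g⁻¹ = 1 ∨ FPF (g * v * g⁻¹)) := by
  rcases h with rfl | ⟨h1, h2⟩
  · left; group
  · right
    constructor
    · have hh : (g * v * g⁻¹) * (g * v * g⁻¹) = g * (v * v) * g⁻¹ := by group
      rw [hh, h1]
      group
    · intro x hx
      apply h2 (g⁻¹ x)
      have h3 := congrArg (fun z => g⁻¹ z) hx
      simp only [Perm.mul_apply, Perm.inv_apply_self] at h3
      exact h3

def theta : Perm (Fin 4) → Perm (Fin 4) := fun g => g * vnu (g⁻¹ 3)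

lemma theta_fix3 (g : Perm (Fin 4)) : theta g 3 = 3 := by
  show (g * vnu (g⁻¹ 3)) 3 = 3
  rw [Perm.mul_apply, vnu_3, Perm.apply_inv_self]

lemma theta_vrel (g : Perm (Fin 4)) :
    theta g * g⁻¹ = 1 ∨ FPF (theta g * g⁻¹) := by
  have h : theta g * g⁻¹ = g * vnu (g⁻¹ 3) * g⁻¹ := rfl
  rw [h]
  exact V_conj _ g (vnu_V _)

lemma theta_hom (g h : Perm (Fin 4)) : theta (g * h) = theta g * theta h := by
  have hw : theta g * theta h = (g * h) * (h⁻¹ * vnu (g⁻¹ 3) * h * vnu (h⁻¹ 3)) := by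
    show g * vnu (g⁻¹ 3) * (h * vnu (h⁻¹ 3)) = _
    group
  set w := h⁻¹ * vnu (g⁻¹ 3) * h * vnu (h⁻¹ 3) with hwdef
  have hwV : w = 1 ∨ FPF w := by
    have h1 : h⁻¹ * vnu (g⁻¹ 3) * h = h⁻¹ * vnu (g⁻¹ 3) * (h⁻¹)⁻¹ := by group
    have h2 := V_conj (vnu (g⁻¹ 3)) h⁻¹ (vnu_V _)
    rw [← h1] at h2
    have h3 := V_mul _ _ h2 (vnu_V (h⁻¹ 3))
    exact h3
  have hw3 : w 3 = (g * h)⁻¹ 3 := by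
    rw [hwdef]
    simp only [Perm.mul_apply]
    rw [vnu_3, Perm.apply_inv_self, vnu_3, mul_inv_rev, Perm.mul_apply]
  have hkey := V_unique _ _ (vnu_V ((g * h)⁻¹ 3)) hwV (by rw [vnu_3, hw3])
  show (g * h) * vnu ((g * h)⁻¹ 3) = theta g * theta h
  rw [hkey, hw]

lemma theta_idem (g : Perm (Fin 4)) : theta (theta g) = theta g := by
  show theta g * vnu ((theta g)⁻¹ 3) = theta g
  have h1 : (theta g)⁻¹ 3 = 3 := by
    have h0 := theta_fix3 g
    have h2 := congrArg (fun z => (theta g)⁻¹ z) h0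
    simp only [Perm.inv_apply_self] at h2
    exact h2.symm
  rw [h1, vnu_at3, mul_one]

lemma theta_ne : theta (Equiv.swap 0 3) ≠ Equiv.swap 0 3 := by decide

open Classical in
noncomputable def eta4 : (Fin 4 → Fin 4) → (Fin 4 → Fin 4) :=
  fun s => if h : Function.Bijective s then ⇑(theta (Equiv.ofBijective s h)) else cst 3

lemma eta4_bij {s : Fin 4 → Fin 4} (h : Function.Bijective s) :
    eta4 s = ⇑(theta (Equiv.ofBijective s h)) := dif_pos h

lemma eta4_sing {s : Fin 4 → Fin 4} (h : ¬ Function.Bijective s) :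
    eta4 s = cst 3 := dif_neg h

lemma eta4_coe (σ : Perm (Fin 4)) : eta4 ⇑σ = ⇑(theta σ) := by
  have h : Equiv.ofBijective ⇑σ σ.bijective = σ := Equiv.coe_fn_injective rfl
  rw [eta4_bij σ.bijective, h]

lemma eta4_endo : IsEndo eta4 := by
  intro s s'
  by_cases hs : Function.Bijective s <;> by_cases hs' : Function.Bijective s'
  · rw [eta4_bij hs, eta4_bij hs', eta4_bij (hs.comp hs')]
    have hof : Equiv.ofBijective (s ∘ s') (hs.comp hs')
        = Equiv.ofBijective s hs * Equiv.ofBijective s' hs' := Equiv.coe_fn_injective rfl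
    rw [hof, theta_hom]
    rfl
  · rw [eta4_sing (not_bij_comp_right hs'), eta4_bij hs, eta4_sing hs']
    funext z
    show (3 : Fin 4) = theta _ 3
    exact (theta_fix3 _).symm
  · rw [eta4_sing (not_bij_comp_left hs), eta4_sing hs]
    rfl
  · rw [eta4_sing (not_bij_comp_left hs), eta4_sing hs]
    rfl

lemma eta4_idem : (fun x => eta4 (eta4 x)) = eta4 := by
  funext s
  by_cases hs : Function.Bijective s
  · rw [eta4_bij hs, eta4_coe, theta_idem]
  · rw [eta4_sing hs]
    exact eta4_sing (not_bij_cst (by omega) 3)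

/-- the common fiber condition for exotic endomorphisms -/
def ECond (x y : Fin 4 → Fin 4) : Prop :=
  (¬ Function.Bijective x ∧ ¬ Function.Bijective y) ∨
    (∃ σ τ : Perm (Fin 4), ⇑σ = x ∧ ⇑τ = y ∧ (σ * τ⁻¹ = 1 ∨ FPF (σ * τ⁻¹)))

section ExoticProps

variable {φ : (Fin 4 → Fin 4) → (Fin 4 → Fin 4)} {q : Fin 4}

lemma exotic_fiber (hsing : ∀ s, ¬ Function.Bijective s → φ s = cst q)
    (hbijfix : ∀ σ : Perm (Fin 4), Function.Bijective (φ ⇑σ) ∧ φ ⇑σ q = q)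
    (hfib : ∀ σ τ : Perm (Fin 4), φ ⇑σ = φ ⇑τ ↔ (σ * τ⁻¹ = 1 ∨ FPF (σ * τ⁻¹)))
    (x y : Fin 4 → Fin 4) : φ x = φ y ↔ ECond x y := by
  by_cases hx : Function.Bijective x <;> by_cases hy : Function.Bijective y
  · set σ := Equiv.ofBijective x hx with hσ
    set τ := Equiv.ofBijective y hy with hτ
    have hcx : ⇑σ = x := rfl
    have hcy : ⇑τ = y := rfl
    constructor
    · intro h
      refine Or.inr ⟨σ, τ, hcx, hcy, ?_⟩
      apply (hfib σ τ).1
      rw [hcx, hcy]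
      exact h
    · rintro (⟨hbx, -⟩ | ⟨σ', τ', hσ', hτ', hV⟩)
      · exact (hbx hx).elim
      · have h2 := (hfib σ' τ').2 hV
        rw [hσ', hτ'] at h2
        exact h2
  · constructor
    · intro h
      exfalso
      have h1 : φ x = φ ⇑(Equiv.ofBijective x hx) := rfl
      have h2 := (hbijfix (Equiv.ofBijective x hx)).1
      rw [← h1, h] at h2
      rw [hsing y hy] at h2
      exact not_bij_cst (by omega) q h2
    · rintro (⟨hbx, -⟩ | ⟨σ', τ', hσ', hτ', hV⟩)
      · exact (hbx hx).elim
      · exact absurd (hτ' ▸ τ'.bijective) hy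
  · constructor
    · intro h
      exfalso
      have h2 := (hbijfix (Equiv.ofBijective y hy)).1
      have h1 : φ y = φ ⇑(Equiv.ofBijective y hy) := rfl
      rw [← h1, ← h] at h2
      rw [hsing x hx] at h2
      exact not_bij_cst (by omega) q h2
    · rintro (⟨-, hby⟩ | ⟨σ', τ', hσ', hτ', hV⟩)
      · exact (hby hy).elim
      · exact absurd (hσ' ▸ σ'.bijective) hx
  · rw [hsing x hx, hsing y hy]
    exact iff_of_true rfl (Or.inl ⟨hx, hy⟩)

lemma exotic_range (hsing : ∀ s, ¬ Function.Bijective s → φ s = cst q)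
    (hunit : ∀ g : Fin 4 → Fin 4,
      (Function.Bijective g ∧ g q = q) ↔ ∃ σ : Perm (Fin 4), φ ⇑σ = g) :
    (Set.range φ).ncard = 7 := by
  classical
  have hr : Set.range φ = insert (cst q)
      ↑(Finset.univ.filter
        (fun h : Fin 4 → Fin 4 => Function.Bijective h ∧ h q = q)) := by
    ext y
    constructor
    · rintro ⟨s, rfl⟩
      by_cases hb : Function.Bijective s
      · right
        have hprops := (hunit (φ s)).2 ⟨Equiv.ofBijective s hb, rfl⟩
        simp only [Finset.coe_filter, Set.mem_setOf_eq]
        exact ⟨Finset.mem_univ _, hprops⟩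
      · left
        exact hsing s hb
    · intro h
      rcases Set.mem_insert_iff.1 h with hy | hm
      · exact ⟨cst 0, by rw [hsing (cst 0) (not_bij_cst (by omega) 0), hy]⟩
      · simp only [Finset.coe_filter, Set.mem_setOf_eq] at hm
        obtain ⟨σ, hσ⟩ := (hunit y).1 hm.2
        exact ⟨⇑σ, hσ⟩
  rw [hr, Set.ncard_insert_of_notMem, Set.ncard_coe_finset, stabfun_card q]
  · intro hmem
    simp only [Finset.coe_filter, Set.mem_setOf_eq] at hmem
    exact not_bij_cst (by omega) q hmem.2.1

end ExoticProps

end Eta4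

section FixNotFix

variable {t e : Fin n → Fin n}

/-- generic: an injective endo is fixed by no nontrivial η -/
lemma notfix_inj {β η : (Fin n → Fin n) → (Fin n → Fin n)}
    (hβi : Function.Injective β) {x} (hx : η x ≠ x) :
    ¬ ((fun y => β (η y)) = β) := fun h => hx (hβi (congrFun h x))

lemma id_ne_cst (hn : 2 ≤ n) : (id : Fin n → Fin n) ≠ cst ⟨0, by omega⟩ := by
  intro h
  have h2 := congrFun h ⟨1, by omega⟩
  have h3 := congrArg Fin.val h2
  simp [cst] at h3

lemma id_ne_swap (hn : 2 ≤ n) :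
    (id : Fin n → Fin n) ≠ ⇑(Equiv.swap (⟨0, by omega⟩ : Fin n) ⟨1, by omega⟩) := by
  intro h
  have h2 := congrFun h ⟨0, by omega⟩
  rw [Equiv.swap_apply_left] at h2
  have h3 := congrArg Fin.val h2
  simp at h3

-- η₁ lemmas
lemma fix_eta1_phi1 (h1 : t ∘ t = t) (h2 : e = t) :
    (fun x : Fin n → Fin n =>
      phi t e ((fun _ : Fin n → Fin n => (id : Fin n → Fin n)) x)) = phi t e := by
  funext x
  show phi t e id = phi t e x
  rw [phi_const h1 h2, phi_const h1 h2]

lemma notfix_eta1_phi2 (hn : 2 ≤ n) (h1 : t ∘ t = t) (h2 : e ≠ t) :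
    ¬ ((fun x : Fin n → Fin n =>
      phi t e ((fun _ : Fin n → Fin n => (id : Fin n → Fin n)) x)) = phi t e) := by
  intro h
  have h3 := congrFun h (cst (⟨0, by omega⟩ : Fin n))
  show False
  rw [show phi t e ((fun _ : Fin n → Fin n => (id : Fin n → Fin n))
    (cst (⟨0, by omega⟩ : Fin n))) = t from phi_bij_val h1 Function.bijective_id] at h3
  rw [phi_sing t e (not_bij_cst hn _)] at h3
  exact h2 h3.symm

lemma notfix_eta1_phi3 (hn : 2 ≤ n) (hP : Permissible t e) (h1 : t ∘ t ≠ t) :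
    ¬ ((fun x : Fin n → Fin n =>
      phi t e ((fun _ : Fin n → Fin n => (id : Fin n → Fin n)) x)) = phi t e) := by
  intro h
  have h3 := congrFun h (cst (⟨0, by omega⟩ : Fin n))
  rw [show phi t e ((fun _ : Fin n → Fin n => (id : Fin n → Fin n))
    (cst (⟨0, by omega⟩ : Fin n))) = t ∘ t from phi_even t e isEven_id] at h3
  rw [phi_sing t e (not_bij_cst hn _)] at h3
  exact (perm_rank3_distinct hP h1).2 h3

lemma notfix_eta1_ex {φ : (Fin 4 → Fin 4) → (Fin 4 → Fin 4)} {q : Fin 4}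
    (hsing : ∀ s, ¬ Function.Bijective s → φ s = cst q)
    (hbijfix : ∀ σ : Perm (Fin 4), Function.Bijective (φ ⇑σ) ∧ φ ⇑σ q = q) :
    ¬ ((fun x : Fin 4 → Fin 4 =>
      φ ((fun _ : Fin 4 → Fin 4 => (id : Fin 4 → Fin 4)) x)) = φ) := by
  intro h
  have h3 := congrFun h (cst (0 : Fin 4))
  have h4 : φ (id : Fin 4 → Fin 4) = cst q := by
    rw [show φ ((fun _ : Fin 4 → Fin 4 => (id : Fin 4 → Fin 4)) (cst (0 : Fin 4)))
      = φ (id : Fin 4 → Fin 4) from rfl] at h3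
    rw [h3, hsing _ (not_bij_cst (by omega) 0)]
  have h5 := (hbijfix 1).1
  rw [Perm.coe_one, h4] at h5
  exact not_bij_cst (by omega) q h5

-- η₂ lemmas
lemma fix_eta2_phi1 (hn : 2 ≤ n) (h1 : t ∘ t = t) (h2 : e = t) (a : Fin n) :
    (fun x => phi t e (eta2 a x)) = phi t e := by
  funext s
  show phi t e (eta2 a s) = phi t e s
  rw [phi_const h1 h2, phi_const h1 h2]

lemma fix_eta2_phi2 (hn : 2 ≤ n) (h1 : t ∘ t = t) (a : Fin n) :
    (fun x => phi t e (eta2 a x)) = phi t e := by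
  funext s
  show phi t e (eta2 a s) = phi t e s
  by_cases hs : Function.Bijective s
  · rw [eta2_bij a hs, phi_bij_val h1 Function.bijective_id, phi_bij_val h1 hs]
  · rw [eta2_sing a hs, phi_sing t e (not_bij_cst hn a), phi_sing t e hs]

lemma notfix_eta2_phi3 (hn : 2 ≤ n) (h1 : t ∘ t ≠ t) (a : Fin n) :
    ¬ ((fun x => phi t e (eta2 a x)) = phi t e) := by
  intro h
  have h3 := congrFun h ⇑(Equiv.swap (⟨0, by omega⟩ : Fin n) ⟨1, by omega⟩)
  show False
  rw [show phi t e (eta2 a ⇑(Equiv.swap (⟨0, by omega⟩ : Fin n) ⟨1, by omega⟩))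
      = t ∘ t by
    rw [eta2_bij a (Equiv.bijective _)]
    exact phi_even t e isEven_id] at h3
  rw [phi_odd t e (isOdd_swap01 hn)] at h3
  exact h1 h3

lemma swap01_notV : ¬ ((1 * (Equiv.swap (0 : Fin 4) 1)⁻¹ : Perm (Fin 4)) = 1 ∨
    FPF (1 * (Equiv.swap (0 : Fin 4) 1)⁻¹)) := by decide

lemma notfix_eta2_ex {φ : (Fin 4 → Fin 4) → (Fin 4 → Fin 4)}
    (hfib : ∀ σ τ : Perm (Fin 4), φ ⇑σ = φ ⇑τ ↔ (σ * τ⁻¹ = 1 ∨ FPF (σ * τ⁻¹)))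
    (a : Fin 4) : ¬ ((fun x => φ (eta2 a x)) = φ) := by
  intro h
  have h3 := congrFun h ⇑(Equiv.swap (0 : Fin 4) 1)
  rw [show eta2 a ⇑(Equiv.swap (0 : Fin 4) 1) = id from eta2_bij a (Equiv.bijective _)] at h3
  rw [← Perm.coe_one (α := Fin 4)] at h3
  exact swap01_notV ((hfib 1 (Equiv.swap 0 1)).1 h3)

lemma eta2_ne_witness (hn : 2 ≤ n) (a : Fin n) :
    eta2 a ⇑(Equiv.swap (⟨0, by omega⟩ : Fin n) ⟨1, by omega⟩)
      ≠ ⇑(Equiv.swap (⟨0, by omega⟩ : Fin n) ⟨1, by omega⟩) := by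
  rw [eta2_bij a (Equiv.bijective _)]
  exact id_ne_swap hn

-- η₃ lemmas
lemma swap0102_notV : ¬ ((Equiv.swap (0 : Fin 4) 1 * (Equiv.swap (0 : Fin 4) 2)⁻¹) = 1 ∨
    FPF (Equiv.swap (0 : Fin 4) 1 * (Equiv.swap (0 : Fin 4) 2)⁻¹)) := by decide

lemma notfix_eta3_ex {φ : (Fin 4 → Fin 4) → (Fin 4 → Fin 4)}
    (hfib : ∀ σ τ : Perm (Fin 4), φ ⇑σ = φ ⇑τ ↔ (σ * τ⁻¹ = 1 ∨ FPF (σ * τ⁻¹))) :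
    ¬ ((fun x => φ (phi (⇑(Equiv.swap (0 : Fin 4) 1)) (cst (2 : Fin 4)) x)) = φ) := by
  intro h
  have h3 := congrFun h ⇑(Equiv.swap (0 : Fin 4) 2)
  rw [show phi (⇑(Equiv.swap (0 : Fin 4) 1)) (cst (2 : Fin 4)) ⇑(Equiv.swap (0 : Fin 4) 2)
      = ⇑(Equiv.swap (0 : Fin 4) 1) from
    phi_odd _ _ ⟨_, Equiv.Perm.sign_swap (by decide), rfl⟩] at h3
  exact swap0102_notV ((hfib _ _).1 h3)

lemma eta3_ne_witness {z0 z1 z2 : Fin n} (hn : 2 ≤ n) (h02 : z0 ≠ z2) :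
    phi (⇑(Equiv.swap z0 z1)) (cst z2) (cst z0) ≠ cst z0 := by
  rw [phi_sing _ _ (not_bij_cst hn z0)]
  intro h
  exact h02 (congrFun h z0).symm

-- η₄ lemmas
lemma fix_eta4_ex {φ : (Fin 4 → Fin 4) → (Fin 4 → Fin 4)} {q : Fin 4}
    (hsing : ∀ s, ¬ Function.Bijective s → φ s = cst q)
    (hfib : ∀ σ τ : Perm (Fin 4), φ ⇑σ = φ ⇑τ ↔ (σ * τ⁻¹ = 1 ∨ FPF (σ * τ⁻¹))) :
    (fun x => φ (eta4 x)) = φ := by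
  funext s
  show φ (eta4 s) = φ s
  by_cases hs : Function.Bijective s
  · rw [eta4_bij hs]
    have h1 : φ s = φ ⇑(Equiv.ofBijective s hs) := rfl
    rw [h1]
    exact (hfib _ _).2 (theta_vrel _)
  · rw [eta4_sing hs, hsing _ (not_bij_cst (by omega) 3), hsing s hs]

lemma eta4_ne_witness : eta4 ⇑(Equiv.swap (0 : Fin 4) 3) ≠ ⇑(Equiv.swap (0 : Fin 4) 3) := by
  rw [eta4_coe]
  intro h
  exact theta_ne (Equiv.coe_fn_injective h)

/-- rank-3 phi forces n ≥ 3 -/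
lemma perm2_collapse : ∀ t e : Fin 2 → Fin 2,
    (t ∘ t ∘ t = t ∧ t ∘ e = e ∧ e ∘ t = e ∧ e ∘ e = e) → t ∘ t = t := by decide

lemma rank3_n3 (hn : 2 ≤ n) (hP : Permissible t e) (h1 : t ∘ t ≠ t) : 3 ≤ n := by
  by_contra h
  push_neg at h
  have hn2 : n = 2 := by omega
  subst hn2
  exact h1 (perm2_collapse t e ⟨hP.1, hP.2.1, hP.2.2.1, hP.2.2.2⟩)

end FixNotFix

section Main

variable {φ α β : (Fin n → Fin n) → (Fin n → Fin n)}

lemma label_of (hn : 2 ≤ n) (hφ : IsEndo φ) :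
    Function.Injective φ ∨
    (∃ t e, Permissible t e ∧ φ = phi t e ∧ t ∘ t = t ∧ e = t) ∨
    (∃ t e, Permissible t e ∧ φ = phi t e ∧ t ∘ t = t ∧ e ≠ t) ∨
    (∃ t e, Permissible t e ∧ φ = phi t e ∧ t ∘ t ≠ t) ∨
    (n = 4 ∧ ∀ σ : Perm (Fin n),
      φ ⇑σ = φ id ↔ (σ = 1 ∨ (σ * σ = 1 ∧ ∀ x, σ x ≠ x))) := by
  by_cases hφi : Function.Injective φ
  · exact Or.inl hφi
  rcases classify hn hφ hφi with ⟨t, e, hP, hphi⟩ | hex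
  · rcases rank_perm_cases hP with ⟨h1, h2⟩ | ⟨h1, h2⟩ | h1
    · exact Or.inr (Or.inl ⟨t, e, hP, hphi, h1, h2⟩)
    · exact Or.inr (Or.inr (Or.inl ⟨t, e, hP, hphi, h1, h2⟩))
    · exact Or.inr (Or.inr (Or.inr (Or.inl ⟨t, e, hP, hphi, h1⟩)))
  · exact Or.inr (Or.inr (Or.inr (Or.inr hex)))

lemma vnu0_FPF : FPF (vnu (0 : Fin 4)) := by decide
lemma vnu0_ne : ⇑(vnu (0 : Fin 4)) ≠ (id : Fin 4 → Fin 4) := by decide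

lemma exotic_data {φ : (Fin 4 → Fin 4) → (Fin 4 → Fin 4)} (hφ : IsEndo φ)
    (hKV : ∀ σ : Perm (Fin 4),
      φ ⇑σ = φ id ↔ (σ = 1 ∨ (σ * σ = 1 ∧ ∀ x, σ x ≠ x))) :
    ∃ q : Fin 4,
      (∀ s, ¬ Function.Bijective s → φ s = cst q) ∧
      (∀ σ : Perm (Fin 4), Function.Bijective (φ ⇑σ) ∧ φ ⇑σ q = q) ∧
      (∀ σ τ : Perm (Fin 4), φ ⇑σ = φ ⇑τ ↔ (σ * τ⁻¹ = 1 ∨ FPF (σ * τ⁻¹))) ∧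
      (∀ g : Fin 4 → Fin 4,
        (Function.Bijective g ∧ g q = q) ↔ ∃ σ : Perm (Fin 4), φ ⇑σ = g) := by
  have hni : ¬ Function.Injective φ := by
    intro hi
    have h1 : φ ⇑(vnu 0) = φ id := (hKV (vnu 0)).2 (Or.inr vnu0_FPF)
    exact vnu0_ne (hi h1)
  exact caseC hφ (cst_collapse hφ hni) hKV

lemma funeq_iff {α γ δ : (Fin n → Fin n) → (Fin n → Fin n)}
    {P : (Fin n → Fin n) → (Fin n → Fin n) → Prop}
    (hfib : ∀ x y, α x = α y ↔ P x y) :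
    ((fun x => α (γ x)) = fun x => α (δ x)) ↔ ∀ s, P (γ s) (δ s) := by
  constructor
  · intro h s; exact (hfib _ _).1 (congrFun h s)
  · intro h; funext s; exact (hfib _ _).2 (h s)

lemma inj_funeq_iff {α γ δ : (Fin n → Fin n) → (Fin n → Fin n)}
    (hi : Function.Injective α) :
    ((fun x => α (γ x)) = fun x => α (δ x)) ↔ γ = δ := by
  constructor
  · intro h; funext s; exact hi (congrFun h s)
  · intro h; rw [h]

lemma Rstar_of_rank (hn : 2 ≤ n) (hα : IsEndo α) (hβ : IsEndo β)
    (hr : (Set.range α).ncard = (Set.range β).ncard) :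
    ∀ γ δ : (Fin n → Fin n) → (Fin n → Fin n), IsEndo γ → IsEndo δ →
      ((fun x => α (γ x)) = (fun x => α (δ x)) ↔
        (fun x => β (γ x)) = (fun x => β (δ x))) := by
  rcases label_of hn hα with hαi | hα1 | hα2 | hα3 | hαex
  · -- α injective
    rcases label_of hn hβ with hβi | hβ1 | hβ2 | hβ3 | hβex
    · intro γ δ _ _
      rw [inj_funeq_iff hαi, inj_funeq_iff hβi]
    · obtain ⟨t', e', hP', hphi', h1', h2'⟩ := hβ1
      subst hphi'
      exfalso
      rw [rank_inj hαi, phi_rank1 hn h1' h2'] at hr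
      have := nn_ge4 hn; omega
    · obtain ⟨t', e', hP', hphi', h1', h2'⟩ := hβ2
      subst hphi'
      exfalso
      rw [rank_inj hαi, phi_rank2 hn h1' h2'] at hr
      have := nn_ge4 hn; omega
    · obtain ⟨t', e', hP', hphi', h1'⟩ := hβ3
      subst hphi'
      exfalso
      rw [rank_inj hαi, phi_rank3 hn hP' h1'] at hr
      have := nn_ge4 hn; omega
    · obtain ⟨hn4, hKV'⟩ := hβex
      subst hn4
      obtain ⟨q', hsg', hbf', hfb', hun'⟩ := exotic_data hβ hKV'
      exfalso
      rw [rank_inj hαi, exotic_range hsg' hun'] at hr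
      norm_num at hr
  · -- α rank 1
    obtain ⟨t, e, hP, hphi, h1, h2⟩ := hα1
    subst hphi
    rcases label_of hn hβ with hβi | hβ1 | hβ2 | hβ3 | hβex
    · exfalso
      rw [rank_inj hβi, phi_rank1 hn h1 h2] at hr
      have := nn_ge4 hn; omega
    · obtain ⟨t', e', hP', hphi', h1', h2'⟩ := hβ1
      subst hphi'
      intro γ δ _ _
      have hat : (fun x => phi t e (γ x)) = fun x => phi t e (δ x) :=
        funext fun s => by rw [phi_const h1 h2, phi_const h1 h2]
      have hbt : (fun x => phi t' e' (γ x)) = fun x => phi t' e' (δ x) :=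
        funext fun s => by rw [phi_const h1' h2', phi_const h1' h2']
      exact iff_of_true hat hbt
    · obtain ⟨t', e', hP', hphi', h1', h2'⟩ := hβ2
      subst hphi'
      exfalso
      rw [phi_rank1 hn h1 h2, phi_rank2 hn h1' h2'] at hr
      omega
    · obtain ⟨t', e', hP', hphi', h1'⟩ := hβ3
      subst hphi'
      exfalso
      rw [phi_rank1 hn h1 h2, phi_rank3 hn hP' h1'] at hr
      omega
    · obtain ⟨hn4, hKV'⟩ := hβex
      subst hn4
      obtain ⟨q', hsg', hbf', hfb', hun'⟩ := exotic_data hβ hKV'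
      exfalso
      rw [phi_rank1 hn h1 h2, exotic_range hsg' hun'] at hr
      omega
  · -- α rank 2
    obtain ⟨t, e, hP, hphi, h1, h2⟩ := hα2
    subst hphi
    rcases label_of hn hβ with hβi | hβ1 | hβ2 | hβ3 | hβex
    · exfalso
      rw [rank_inj hβi, phi_rank2 hn h1 h2] at hr
      have := nn_ge4 hn; omega
    · obtain ⟨t', e', hP', hphi', h1', h2'⟩ := hβ1
      subst hphi'
      exfalso
      rw [phi_rank2 hn h1 h2, phi_rank1 hn h1' h2'] at hr
      omega
    · obtain ⟨t', e', hP', hphi', h1', h2'⟩ := hβ2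
      subst hphi'
      intro γ δ _ _
      rw [funeq_iff (phi2_fiber h1 h2), funeq_iff (phi2_fiber h1' h2')]
    · obtain ⟨t', e', hP', hphi', h1'⟩ := hβ3
      subst hphi'
      exfalso
      rw [phi_rank2 hn h1 h2, phi_rank3 hn hP' h1'] at hr
      omega
    · obtain ⟨hn4, hKV'⟩ := hβex
      subst hn4
      obtain ⟨q', hsg', hbf', hfb', hun'⟩ := exotic_data hβ hKV'
      exfalso
      rw [phi_rank2 hn h1 h2, exotic_range hsg' hun'] at hr
      omega
  · -- α rank 3
    obtain ⟨t, e, hP, hphi, h1⟩ := hα3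
    subst hphi
    rcases label_of hn hβ with hβi | hβ1 | hβ2 | hβ3 | hβex
    · exfalso
      rw [rank_inj hβi, phi_rank3 hn hP h1] at hr
      have := nn_ge4 hn; omega
    · obtain ⟨t', e', hP', hphi', h1', h2'⟩ := hβ1
      subst hphi'
      exfalso
      rw [phi_rank3 hn hP h1, phi_rank1 hn h1' h2'] at hr
      omega
    · obtain ⟨t', e', hP', hphi', h1', h2'⟩ := hβ2
      subst hphi'
      exfalso
      rw [phi_rank3 hn hP h1, phi_rank2 hn h1' h2'] at hr
      omega
    · obtain ⟨t', e', hP', hphi', h1'⟩ := hβ3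
      subst hphi'
      intro γ δ _ _
      rw [funeq_iff (phi3_fiber hP h1), funeq_iff (phi3_fiber hP' h1')]
    · obtain ⟨hn4, hKV'⟩ := hβex
      subst hn4
      obtain ⟨q', hsg', hbf', hfb', hun'⟩ := exotic_data hβ hKV'
      exfalso
      rw [phi_rank3 hn hP h1, exotic_range hsg' hun'] at hr
      omega
  · -- α exotic
    obtain ⟨hn4, hKV⟩ := hαex
    subst hn4
    obtain ⟨q, hsg, hbf, hfb, hun⟩ := exotic_data hα hKV
    rcases label_of hn hβ with hβi | hβ1 | hβ2 | hβ3 | hβex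
    · exfalso
      rw [rank_inj hβi, exotic_range hsg hun] at hr
      norm_num at hr
    · obtain ⟨t', e', hP', hphi', h1', h2'⟩ := hβ1
      subst hphi'
      exfalso
      rw [exotic_range hsg hun, phi_rank1 hn h1' h2'] at hr
      omega
    · obtain ⟨t', e', hP', hphi', h1', h2'⟩ := hβ2
      subst hphi'
      exfalso
      rw [exotic_range hsg hun, phi_rank2 hn h1' h2'] at hr
      omega
    · obtain ⟨t', e', hP', hphi', h1'⟩ := hβ3
      subst hphi'
      exfalso
      rw [exotic_range hsg hun, phi_rank3 hn hP' h1'] at hr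
      omega
    · obtain ⟨hn4', hKV'⟩ := hβex
      obtain ⟨q', hsg', hbf', hfb', hun'⟩ := exotic_data hβ hKV'
      intro γ δ _ _
      rw [funeq_iff (exotic_fiber hsg hbf hfb), funeq_iff (exotic_fiber hsg' hbf' hfb')]

end Main

section Main2

variable {α β : (Fin n → Fin n) → (Fin n → Fin n)}

lemma rank_of_Rtilde (hn : 2 ≤ n) (hα : IsEndo α) (hβ : IsEndo β)
    (h : ∀ η : (Fin n → Fin n) → (Fin n → Fin n), IsEndo η → (fun x => η (η x)) = η →
      ((fun x => α (η x)) = α ↔ (fun x => β (η x)) = β)) :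
    (Set.range α).ncard = (Set.range β).ncard := by
  rcases label_of hn hα with hαi | hα1 | hα2 | hα3 | hαex
  · -- α injective
    rcases label_of hn hβ with hβi | hβ1 | hβ2 | hβ3 | hβex
    · rw [rank_inj hαi, rank_inj hβi]
    · obtain ⟨t', e', hP', hphi', h1', h2'⟩ := hβ1
      subst hphi'
      exact absurd ((h _ eta1_endo eta1_idem).2 (fix_eta1_phi1 h1' h2'))
        (notfix_inj hαi (id_ne_cst hn))
    · obtain ⟨t', e', hP', hphi', h1', h2'⟩ := hβ2
      subst hphi'
      exact absurd ((h _ (eta2_endo _) (eta2_idem hn _)).2 (fix_eta2_phi2 hn h1' ⟨0, by omega⟩))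
        (notfix_inj hαi (eta2_ne_witness hn ⟨0, by omega⟩))
    · obtain ⟨t', e', hP', hphi', h1'⟩ := hβ3
      subst hphi'
      have hn3 : 3 ≤ n := rank3_n3 hn hP' h1'
      have h01 : (⟨0, by omega⟩ : Fin n) ≠ ⟨1, by omega⟩ := by
        intro hh; have := congrArg Fin.val hh; simp at this
      have h02 : (⟨0, by omega⟩ : Fin n) ≠ ⟨2, by omega⟩ := by
        intro hh; have := congrArg Fin.val hh; simp at this
      have h12 : (⟨1, by omega⟩ : Fin n) ≠ ⟨2, by omega⟩ := by
        intro hh; have := congrArg Fin.val hh; simp at this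
      exact absurd ((h _ (phi_endo (eta3_perm h01 h02 h12))
          (phi_idem_of ⟨_, Equiv.Perm.sign_swap h01, rfl⟩ (not_bij_cst hn _))).2
          (eta3_fixes_phi hP' h01))
        (notfix_inj hαi (eta3_ne_witness hn h02))
    · obtain ⟨hn4, hKV'⟩ := hβex
      subst hn4
      obtain ⟨q', hsg', hbf', hfb', hun'⟩ := exotic_data hβ hKV'
      exact absurd ((h _ eta4_endo eta4_idem).2 (fix_eta4_ex hsg' hfb'))
        (notfix_inj hαi eta4_ne_witness)
  · -- α rank 1
    obtain ⟨t, e, hP, hphi, h1, h2⟩ := hα1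
    subst hphi
    rcases label_of hn hβ with hβi | hβ1 | hβ2 | hβ3 | hβex
    · exact absurd ((h _ eta1_endo eta1_idem).1 (fix_eta1_phi1 h1 h2))
        (notfix_inj hβi (id_ne_cst hn))
    · obtain ⟨t', e', hP', hphi', h1', h2'⟩ := hβ1
      subst hphi'
      rw [phi_rank1 hn h1 h2, phi_rank1 hn h1' h2']
    · obtain ⟨t', e', hP', hphi', h1', h2'⟩ := hβ2
      subst hphi'
      exact absurd ((h _ eta1_endo eta1_idem).1 (fix_eta1_phi1 h1 h2))
        (notfix_eta1_phi2 hn h1' h2')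
    · obtain ⟨t', e', hP', hphi', h1'⟩ := hβ3
      subst hphi'
      exact absurd ((h _ eta1_endo eta1_idem).1 (fix_eta1_phi1 h1 h2))
        (notfix_eta1_phi3 hn hP' h1')
    · obtain ⟨hn4, hKV'⟩ := hβex
      subst hn4
      obtain ⟨q', hsg', hbf', hfb', hun'⟩ := exotic_data hβ hKV'
      exact absurd ((h _ eta1_endo eta1_idem).1 (fix_eta1_phi1 h1 h2))
        (notfix_eta1_ex hsg' hbf')
  · -- α rank 2
    obtain ⟨t, e, hP, hphi, h1, h2⟩ := hα2
    subst hphi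
    rcases label_of hn hβ with hβi | hβ1 | hβ2 | hβ3 | hβex
    · exact absurd ((h _ (eta2_endo _) (eta2_idem hn _)).1 (fix_eta2_phi2 hn h1 ⟨0, by omega⟩))
        (notfix_inj hβi (eta2_ne_witness hn ⟨0, by omega⟩))
    · obtain ⟨t', e', hP', hphi', h1', h2'⟩ := hβ1
      subst hphi'
      exact absurd ((h _ eta1_endo eta1_idem).2 (fix_eta1_phi1 h1' h2'))
        (notfix_eta1_phi2 hn h1 h2)
    · obtain ⟨t', e', hP', hphi', h1', h2'⟩ := hβ2
      subst hphi'
      rw [phi_rank2 hn h1 h2, phi_rank2 hn h1' h2']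
    · obtain ⟨t', e', hP', hphi', h1'⟩ := hβ3
      subst hphi'
      exact absurd ((h _ (eta2_endo _) (eta2_idem hn _)).1 (fix_eta2_phi2 hn h1 ⟨0, by omega⟩))
        (notfix_eta2_phi3 hn h1' ⟨0, by omega⟩)
    · obtain ⟨hn4, hKV'⟩ := hβex
      subst hn4
      obtain ⟨q', hsg', hbf', hfb', hun'⟩ := exotic_data hβ hKV'
      exact absurd ((h _ (eta2_endo _) (eta2_idem hn _)).1 (fix_eta2_phi2 hn h1 (0 : Fin 4)))
        (notfix_eta2_ex hfb' (0 : Fin 4))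
  · -- α rank 3
    obtain ⟨t, e, hP, hphi, h1⟩ := hα3
    subst hphi
    rcases label_of hn hβ with hβi | hβ1 | hβ2 | hβ3 | hβex
    · have hn3 : 3 ≤ n := rank3_n3 hn hP h1
      have h01 : (⟨0, by omega⟩ : Fin n) ≠ ⟨1, by omega⟩ := by
        intro hh; have := congrArg Fin.val hh; simp at this
      have h02 : (⟨0, by omega⟩ : Fin n) ≠ ⟨2, by omega⟩ := by
        intro hh; have := congrArg Fin.val hh; simp at this
      have h12 : (⟨1, by omega⟩ : Fin n) ≠ ⟨2, by omega⟩ := by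
        intro hh; have := congrArg Fin.val hh; simp at this
      exact absurd ((h _ (phi_endo (eta3_perm h01 h02 h12))
          (phi_idem_of ⟨_, Equiv.Perm.sign_swap h01, rfl⟩ (not_bij_cst hn _))).1
          (eta3_fixes_phi hP h01))
        (notfix_inj hβi (eta3_ne_witness hn h02))
    · obtain ⟨t', e', hP', hphi', h1', h2'⟩ := hβ1
      subst hphi'
      exact absurd ((h _ eta1_endo eta1_idem).2 (fix_eta1_phi1 h1' h2'))
        (notfix_eta1_phi3 hn hP h1)
    · obtain ⟨t', e', hP', hphi', h1', h2'⟩ := hβ2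
      subst hphi'
      exact absurd ((h _ (eta2_endo _) (eta2_idem hn _)).2 (fix_eta2_phi2 hn h1' ⟨0, by omega⟩))
        (notfix_eta2_phi3 hn h1 ⟨0, by omega⟩)
    · obtain ⟨t', e', hP', hphi', h1'⟩ := hβ3
      subst hphi'
      rw [phi_rank3 hn hP h1, phi_rank3 hn hP' h1']
    · obtain ⟨hn4, hKV'⟩ := hβex
      subst hn4
      obtain ⟨q', hsg', hbf', hfb', hun'⟩ := exotic_data hβ hKV'
      have h01 : (0 : Fin 4) ≠ 1 := by decide
      have h02 : (0 : Fin 4) ≠ 2 := by decide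
      have h12 : (1 : Fin 4) ≠ 2 := by decide
      exact absurd ((h _ (phi_endo (eta3_perm h01 h02 h12))
          (phi_idem_of ⟨_, Equiv.Perm.sign_swap h01, rfl⟩ (not_bij_cst (by omega) _))).1
          (eta3_fixes_phi hP h01))
        (notfix_eta3_ex hfb')
  · -- α exotic
    obtain ⟨hn4, hKV⟩ := hαex
    subst hn4
    obtain ⟨q, hsg, hbf, hfb, hun⟩ := exotic_data hα hKV
    rcases label_of hn hβ with hβi | hβ1 | hβ2 | hβ3 | hβex
    · exact absurd ((h _ eta4_endo eta4_idem).1 (fix_eta4_ex hsg hfb))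
        (notfix_inj hβi eta4_ne_witness)
    · obtain ⟨t', e', hP', hphi', h1', h2'⟩ := hβ1
      subst hphi'
      exact absurd ((h _ eta1_endo eta1_idem).2 (fix_eta1_phi1 h1' h2'))
        (notfix_eta1_ex hsg hbf)
    · obtain ⟨t', e', hP', hphi', h1', h2'⟩ := hβ2
      subst hphi'
      exact absurd ((h _ (eta2_endo _) (eta2_idem hn _)).2 (fix_eta2_phi2 hn h1' (0 : Fin 4)))
        (notfix_eta2_ex hfb (0 : Fin 4))
    · obtain ⟨t', e', hP', hphi', h1'⟩ := hβ3
      subst hphi'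
      have h01 : (0 : Fin 4) ≠ 1 := by decide
      have h02 : (0 : Fin 4) ≠ 2 := by decide
      have h12 : (1 : Fin 4) ≠ 2 := by decide
      exact absurd ((h _ (phi_endo (eta3_perm h01 h02 h12))
          (phi_idem_of ⟨_, Equiv.Perm.sign_swap h01, rfl⟩ (not_bij_cst (by omega) _))).2
          (eta3_fixes_phi hP' h01))
        (notfix_eta3_ex hfb)
    · obtain ⟨hn4', hKV'⟩ := hβex
      obtain ⟨q', hsg', hbf', hfb', hun'⟩ := exotic_data hβ hKV'
      rw [exotic_range hsg hun, exotic_range hsg' hun']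

end Main2

end Tn

/-- For semigroup endomorphisms `α`, `β` of `T_n`, the following are equivalent:
(i) `α R* β`; (ii) `α R~ β`; (iii) `α` and `β` have the same rank. -/
theorem Rstar_Rtilde_rank (n : ℕ) (α β : (Fin n → Fin n) → (Fin n → Fin n))
    (hα : IsEndo α) (hβ : IsEndo β) :
    ((∀ γ δ : (Fin n → Fin n) → (Fin n → Fin n), IsEndo γ → IsEndo δ →
        ((fun x => α (γ x)) = (fun x => α (δ x)) ↔
          (fun x => β (γ x)) = (fun x => β (δ x)))) ↔
      (Set.range α).ncard = (Set.range β).ncard) ∧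
      ((∀ η : (Fin n → Fin n) → (Fin n → Fin n), IsEndo η → (fun x => η (η x)) = η →
          ((fun x => α (η x)) = α ↔ (fun x => β (η x)) = β)) ↔
        (Set.range α).ncard = (Set.range β).ncard) := by
  by_cases hn : 2 ≤ n
  · refine ⟨⟨fun hstar => ?_, fun hr => Tn.Rstar_of_rank hn hα hβ hr⟩,
      ⟨fun htil => Tn.rank_of_Rtilde hn hα hβ htil, fun hr => ?_⟩⟩
    · apply Tn.rank_of_Rtilde hn hα hβ
      intro η hηe _
      exact hstar η id hηe (fun s s' => rfl)
    · intro η hηe _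
      exact Tn.Rstar_of_rank hn hα hβ hr η id hηe (fun s s' => rfl)
  · push_neg at hn
    have hn1 : n ≤ 1 := by omega
    have hfun : ∀ f g : Fin n → Fin n, f = g := by
      intro f g
      funext x
      have h1 := (f x).2
      have h2 := (g x).2
      exact Fin.ext (by omega)
    have hfun2 : ∀ F G : (Fin n → Fin n) → (Fin n → Fin n), F = G :=
      fun F G => funext fun s => hfun _ _
    refine ⟨⟨fun _ => ?_, fun _ => ?_⟩, ⟨fun _ => ?_, fun _ => ?_⟩⟩
    · rw [hfun2 α β]
    · intro γ δ _ _
      exact ⟨fun _ => hfun2 _ _, fun _ => hfun2 _ _⟩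
    · rw [hfun2 α β]
    · intro η _ _
      exact ⟨fun _ => hfun2 _ _, fun _ => hfun2 _ _⟩
end

section
/- Let n ≥ 5 and let α, β be semigroup endomorphisms of T_n. Then α R* β, i.e. for all semigroup endomorphisms γ, δ of T_n one has γ·α = δ·α if and only if γ·β = δ·β, holds if and only if the same condition holds when γ and δ are restricted to idempotents: for all idempotent semigroup endomorphisms η, ζ of T_n, η·α = ζ·α if and only if η·β = ζ·β. -/
namespace RstarAux

open Equiv Function

variable {n : ℕ}

lemma odd_bij {s : Fin n → Fin n} (h : IsOddPerm s) : Function.Bijective s := by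
  obtain ⟨σ, -, rfl⟩ := h; exact σ.bijective

lemma even_bij {s : Fin n → Fin n} (h : IsEvenPerm s) : Function.Bijective s := by
  obtain ⟨σ, -, rfl⟩ := h; exact σ.bijective

lemma not_odd_and_even {s : Fin n → Fin n} (h : IsOddPerm s) (h' : IsEvenPerm s) : False := by
  obtain ⟨σ, hσ, rfl⟩ := h
  obtain ⟨τ, hτ, hts⟩ := h'
  have : τ = σ := Equiv.coe_fn_injective hts
  rw [this, hσ] at hτ
  exact absurd hτ (by decide)

lemma bij_odd_or_even {s : Fin n → Fin n} (h : Function.Bijective s) :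
    IsOddPerm s ∨ IsEvenPerm s := by
  rcases Int.units_eq_one_or (Equiv.Perm.sign (Equiv.ofBijective s h)) with h1 | h1
  · exact Or.inr ⟨_, h1, rfl⟩
  · exact Or.inl ⟨_, h1, rfl⟩

lemma comp_odd_odd {s s' : Fin n → Fin n} (h : IsOddPerm s) (h' : IsOddPerm s') :
    IsEvenPerm (s ∘ s') := by
  obtain ⟨σ, hσ, rfl⟩ := h; obtain ⟨τ, hτ, rfl⟩ := h'
  exact ⟨σ * τ, by simp [hσ, hτ], Equiv.Perm.coe_mul σ τ⟩

lemma comp_odd_even {s s' : Fin n → Fin n} (h : IsOddPerm s) (h' : IsEvenPerm s') :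
    IsOddPerm (s ∘ s') := by
  obtain ⟨σ, hσ, rfl⟩ := h; obtain ⟨τ, hτ, rfl⟩ := h'
  exact ⟨σ * τ, by simp [hσ, hτ], Equiv.Perm.coe_mul σ τ⟩

lemma comp_even_odd {s s' : Fin n → Fin n} (h : IsEvenPerm s) (h' : IsOddPerm s') :
    IsOddPerm (s ∘ s') := by
  obtain ⟨σ, hσ, rfl⟩ := h; obtain ⟨τ, hτ, rfl⟩ := h'
  exact ⟨σ * τ, by simp [hσ, hτ], Equiv.Perm.coe_mul σ τ⟩

lemma comp_even_even {s s' : Fin n → Fin n} (h : IsEvenPerm s) (h' : IsEvenPerm s') :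
    IsEvenPerm (s ∘ s') := by
  obtain ⟨σ, hσ, rfl⟩ := h; obtain ⟨τ, hτ, rfl⟩ := h'
  exact ⟨σ * τ, by simp [hσ, hτ], Equiv.Perm.coe_mul σ τ⟩

lemma comp_nonbij_left {s s' : Fin n → Fin n} (h : ¬ Function.Bijective s) :
    ¬ Function.Bijective (s ∘ s') := fun hb =>
  h ((Finite.surjective_iff_bijective).1 (Function.Surjective.of_comp hb.2))

lemma comp_nonbij_right {s s' : Fin n → Fin n} (h : ¬ Function.Bijective s') :
    ¬ Function.Bijective (s ∘ s') := fun hb =>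
  h ((Finite.injective_iff_bijective).1 (Function.Injective.of_comp hb.1))

lemma nonbij_not_odd {s : Fin n → Fin n} (h : ¬ Function.Bijective s) : ¬ IsOddPerm s :=
  fun h' => h (odd_bij h')

lemma nonbij_not_even {s : Fin n → Fin n} (h : ¬ Function.Bijective s) : ¬ IsEvenPerm s :=
  fun h' => h (even_bij h')

/-- existence of a permutation sending a specified pair to a specified pair -/
lemma exists_perm_pair {a b c d : Fin n} (hab : a ≠ b) (hcd : c ≠ d) :
    ∃ π : Equiv.Perm (Fin n), π a = c ∧ π b = d := by
  refine ⟨Equiv.swap (Equiv.swap a c b) d * Equiv.swap a c, ?_, ?_⟩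
  · have h1 : Equiv.swap a c a = c := Equiv.swap_apply_left a c
    have h2 : (Equiv.swap a c b) ≠ c := by
      intro h; exact hab (Equiv.swap a c |>.injective (by rw [h1, h]))
    simp only [Equiv.Perm.mul_apply, h1]
    exact Equiv.swap_apply_of_ne_of_ne (Ne.symm h2) hcd
  · simp only [Equiv.Perm.mul_apply]
    exact Equiv.swap_apply_left _ d

/-- existence of an even permutation sending a specified pair to a specified pair -/
lemma exists_even_perm_pair (hn : 5 ≤ n) {a b c d : Fin n} (hab : a ≠ b) (hcd : c ≠ d) :
    ∃ π : Equiv.Perm (Fin n), Equiv.Perm.sign π = 1 ∧ π a = c ∧ π b = d := by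
  obtain ⟨π, h1, h2⟩ := exists_perm_pair hab hcd
  rcases Int.units_eq_one_or (Equiv.Perm.sign π) with hs | hs
  · exact ⟨π, hs, h1, h2⟩
  · -- pick x ≠ y outside {a, b}
    have hcard : 2 ≤ (Finset.univ \ {a, b} : Finset (Fin n)).card := by
      rw [Finset.card_sdiff_of_subset (Finset.subset_univ _)]
      have h2 : ({a, b} : Finset (Fin n)).card ≤ 2 := Finset.card_insert_le _ _ |>.trans (by simp)
      have hu : (Finset.univ : Finset (Fin n)).card = n := by simp
      omega
    obtain ⟨x, hx, y, hy, hxy⟩ := Finset.one_lt_card.mp (lt_of_lt_of_le one_lt_two hcard)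
    simp only [Finset.mem_sdiff, Finset.mem_insert, Finset.mem_singleton] at hx hy
    refine ⟨π * Equiv.swap x y, ?_, ?_, ?_⟩
    · rw [map_mul, hs, Equiv.Perm.sign_swap hxy]; decide
    · rw [Equiv.Perm.mul_apply,
        Equiv.swap_apply_of_ne_of_ne (fun h => hx.2 (Or.inl h.symm)) (fun h => hy.2 (Or.inl h.symm)), h1]
    · rw [Equiv.Perm.mul_apply,
        Equiv.swap_apply_of_ne_of_ne (fun h => hx.2 (Or.inr h.symm)) (fun h => hy.2 (Or.inr h.symm)), h2]

end RstarAux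
section PhiLemmas
open Function
variable {n : ℕ}
namespace RstarAux

lemma phi_odd {t e s : Fin n → Fin n} (h : IsOddPerm s) : phi t e s = t := if_pos h

lemma phi_even {t e s : Fin n → Fin n} (h : IsEvenPerm s) : phi t e s = t ∘ t := by
  rw [phi, if_neg (fun h' => not_odd_and_even h' h), if_pos h]

lemma phi_nonbij {t e s : Fin n → Fin n} (h : ¬ Function.Bijective s) : phi t e s = e := by
  rw [phi, if_neg (nonbij_not_odd h), if_neg (nonbij_not_even h)]

lemma phi_isEndo {t e : Fin n → Fin n} (h : Permissible t e) : IsEndo (phi t e) := by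
  obtain ⟨h3, hte, het, hee⟩ := h
  intro s s'
  by_cases hb : Function.Bijective s
  · rcases bij_odd_or_even hb with ho | he
    · by_cases hb' : Function.Bijective s'
      · rcases bij_odd_or_even hb' with ho' | he'
        · rw [phi_odd ho, phi_odd ho', phi_even (comp_odd_odd ho ho')]
        · rw [phi_odd ho, phi_even he', phi_odd (comp_odd_even ho he')]
          exact h3.symm
      · rw [phi_odd ho, phi_nonbij hb', phi_nonbij (comp_nonbij_right hb'), hte]
    · by_cases hb' : Function.Bijective s'
      · rcases bij_odd_or_even hb' with ho' | he'
        · rw [phi_even he, phi_odd ho', phi_odd (comp_even_odd he ho')]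
          rw [Function.comp_assoc]
          exact h3.symm
        · rw [phi_even he, phi_even he', phi_even (comp_even_even he he')]
          have hcalc : (t ∘ t) ∘ (t ∘ t) = t ∘ (t ∘ t ∘ t) := by
            simp [Function.comp_assoc]
          rw [hcalc, h3]
      · rw [phi_even he, phi_nonbij hb', phi_nonbij (comp_nonbij_right hb')]
        conv_rhs => rw [Function.comp_assoc, hte, hte]
  · rw [phi_nonbij hb, phi_nonbij (comp_nonbij_left hb)]
    by_cases hb' : Function.Bijective s'
    · rcases bij_odd_or_even hb' with ho' | he'
      · rw [phi_odd ho', het]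
      · rw [phi_even he']
        conv_rhs => rw [← Function.comp_assoc, het, het]
    · rw [phi_nonbij hb', hee]

lemma phi_idem_of_odd {t e : Fin n → Fin n} (ht : IsOddPerm t) (he : ¬ Function.Bijective e) :
    (fun x => phi t e (phi t e x)) = phi t e := by
  funext x
  by_cases hb : Function.Bijective x
  · rcases bij_odd_or_even hb with ho | hev
    · rw [phi_odd ho, phi_odd ht]
    · rw [phi_even hev, phi_even (comp_odd_odd ht ht)]
  · rw [phi_nonbij hb, phi_nonbij he]

lemma id_even : IsEvenPerm (id : Fin n → Fin n) :=
  ⟨1, by simp, Equiv.Perm.coe_one⟩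

lemma phi_idem_of_id {e : Fin n → Fin n} (he : ¬ Function.Bijective e) :
    (fun x => phi id e (phi id e x)) = phi id e := by
  have hii : (id : Fin n → Fin n) ∘ id = id := rfl
  funext x
  by_cases hb : Function.Bijective x
  · rcases bij_odd_or_even hb with ho | hev
    · rw [phi_odd ho, phi_even id_even, hii]
    · rw [phi_even hev, hii, phi_even id_even, hii]
  · rw [phi_nonbij hb, phi_nonbij he]

end RstarAux
end PhiLemmas
section Ker
open Equiv Function
namespace RstarAux

variable {n : ℕ} {φ : (Fin n → Fin n) → (Fin n → Fin n)}

lemma endo_id_left (hφ : IsEndo φ) (x : Fin n → Fin n) : φ id ∘ φ x = φ x := by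
  have := hφ id x; rw [Function.id_comp] at this; exact this.symm

lemma endo_id_right (hφ : IsEndo φ) (x : Fin n → Fin n) : φ x ∘ φ id = φ x := by
  have := hφ x id; rw [Function.comp_id] at this; exact this.symm

lemma endo_inv_comp (hφ : IsEndo φ) (σ : Equiv.Perm (Fin n)) :
    φ ⇑σ⁻¹ ∘ φ ⇑σ = φ id := by
  have h : ⇑σ⁻¹ ∘ ⇑σ = (id : Fin n → Fin n) := by
    funext x; exact Equiv.symm_apply_apply σ x
  rw [← hφ, h]

lemma injective_of_perm_inj (hn : 5 ≤ n) (hφ : IsEndo φ)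
    (hinj : ∀ σ τ : Equiv.Perm (Fin n), φ ⇑σ = φ ⇑τ → σ = τ) :
    Function.Injective φ := by
  obtain ⟨z0, z1, hz01⟩ : ∃ z0 z1 : Fin n, z0 ≠ z1 :=
    ⟨⟨0, by omega⟩, ⟨1, by omega⟩, by simp [Fin.ext_iff]⟩
  intro a b hab
  by_contra hne
  have hp : ∃ p, a p ≠ b p := by
    by_contra h; push_neg at h; exact hne (funext h)
  obtain ⟨p, hp⟩ := hp
  -- the two constants at `a p` and `b p` are collapsed
  have hcab : φ (fun _ => a p) = φ (fun _ => b p) := by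
    have h1 := hφ a (fun _ => p)
    have h2 := hφ b (fun _ => p)
    have e1 : a ∘ (fun _ : Fin n => p) = (fun _ => a p) := rfl
    have e2 : b ∘ (fun _ : Fin n => p) = (fun _ => b p) := rfl
    rw [e1] at h1; rw [e2] at h2
    rw [h1, h2, hab]
  -- all constants are collapsed
  have hconst : ∀ w w' : Fin n, φ (fun _ => w) = φ (fun _ => w') := by
    intro w w'
    rcases eq_or_ne w w' with rfl | hww'
    · rfl
    obtain ⟨π, hπ1, hπ2⟩ := exists_perm_pair hp hww'
    have e1 : (⇑π) ∘ (fun _ : Fin n => a p) = (fun _ : Fin n => w) := by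
      funext x; simp [hπ1]
    have e2 : (⇑π) ∘ (fun _ : Fin n => b p) = (fun _ : Fin n => w') := by
      funext x; simp [hπ2]
    calc φ (fun _ => w) = φ (⇑π ∘ fun _ => a p) := by rw [e1]
      _ = φ ⇑π ∘ φ (fun _ => a p) := hφ _ _
      _ = φ ⇑π ∘ φ (fun _ => b p) := by rw [hcab]
      _ = φ (⇑π ∘ fun _ => b p) := (hφ _ _).symm
      _ = φ (fun _ => w') := by rw [e2]
  -- every φ ⇑σ fixes the common constant image
  have hE : ∀ σ : Equiv.Perm (Fin n), φ ⇑σ ∘ φ (fun _ => z0) = φ (fun _ => z0) := by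
    intro σ
    have e1 : (⇑σ) ∘ (fun _ : Fin n => z0) = (fun _ : Fin n => σ z0) := rfl
    calc φ ⇑σ ∘ φ (fun _ => z0) = φ (⇑σ ∘ fun _ => z0) := (hφ _ _).symm
      _ = φ (fun _ => σ z0) := by rw [e1]
      _ = φ (fun _ => z0) := hconst _ _
  -- ε = φ id facts
  have hεε : φ id ∘ φ id = φ id := endo_id_left hφ id
  have hfix : ∀ y, φ id (φ id y) = φ id y := fun y => congrFun hεε y
  have hrange : ∀ (x : Fin n → Fin n) (z : Fin n), φ x z ∈ Set.range (φ id) :=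
    fun x z => ⟨φ x z, congrFun (endo_id_left hφ x) z⟩
  have hSfix : ∀ x ∈ Set.range (φ id), φ id x = x := by
    rintro x ⟨y, rfl⟩; exact hfix y
  -- the injection into permutations of the range of ε
  have hΨ : ∀ σ : Equiv.Perm (Fin n),
      ∃ ψ : (Set.range (φ id)) ≃ (Set.range (φ id)), ∀ x : Set.range (φ id),
        (ψ x : Fin n) = φ ⇑σ x := by
    intro σ
    refine ⟨⟨fun x => ⟨φ ⇑σ x, hrange _ _⟩, fun x => ⟨φ ⇑σ⁻¹ x, hrange _ _⟩, ?_, ?_⟩, fun x => rfl⟩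
    · rintro ⟨x, hx⟩
      apply Subtype.ext
      have h1 : φ ⇑σ⁻¹ (φ ⇑σ x) = φ id x := congrFun (endo_inv_comp hφ σ) x
      exact h1.trans (hSfix x hx)
    · rintro ⟨x, hx⟩
      apply Subtype.ext
      have h2 := endo_inv_comp hφ σ⁻¹
      rw [inv_inv] at h2
      have h1 : φ ⇑σ (φ ⇑σ⁻¹ x) = φ id x := congrFun h2 x
      exact h1.trans (hSfix x hx)
  choose Ψ hΨspec using hΨ
  have hΨinj : Function.Injective Ψ := by
    intro σ τ h
    apply hinj
    funext z
    have h1 : φ ⇑σ (φ id z) = φ ⇑τ (φ id z) := by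
      have := congrArg Subtype.val (Equiv.ext_iff.1 h ⟨φ id z, ⟨z, rfl⟩⟩)
      rwa [hΨspec σ, hΨspec τ] at this
    have e1 : φ ⇑σ (φ id z) = φ ⇑σ z := congrFun (endo_id_right hφ ⇑σ) z
    have e2 : φ ⇑τ (φ id z) = φ ⇑τ z := congrFun (endo_id_right hφ ⇑τ) z
    rw [e1, e2] at h1
    exact h1
  -- cardinality forces the range of ε to be everything
  haveI : Fintype (Set.range (φ id)) := Fintype.ofFinite _
  have hcard1 : Nat.factorial n ≤ Fintype.card ((Set.range (φ id)) ≃ (Set.range (φ id))) := by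
    calc Nat.factorial n = Fintype.card (Equiv.Perm (Fin n)) := by
          rw [Fintype.card_perm, Fintype.card_fin]
      _ ≤ _ := Fintype.card_le_of_injective Ψ hΨinj
  have hcard2 : Fintype.card ((Set.range (φ id)) ≃ (Set.range (φ id)))
      = (Fintype.card (Set.range (φ id))).factorial := Fintype.card_equiv (Equiv.refl _)
  have hSle : Fintype.card (Set.range (φ id)) ≤ n := by
    have := Fintype.card_le_of_injective (Subtype.val : Set.range (φ id) → Fin n)
      Subtype.val_injective
    rwa [Fintype.card_fin] at this
  have hpos : 0 < Fintype.card (Set.range (φ id)) :=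
    Fintype.card_pos_iff.2 ⟨⟨φ id z0, ⟨z0, rfl⟩⟩⟩
  have hSge : n ≤ Fintype.card (Set.range (φ id)) := by
    by_contra hlt
    push_neg at hlt
    have := (Nat.factorial_lt hpos).2 hlt
    omega
  have hcardeq : Fintype.card (Set.range (φ id)) = n := le_antisymm hSle hSge
  have hsurj : Function.Surjective (φ id) := by
    have hb : Function.Bijective (Subtype.val : Set.range (φ id) → Fin n) := by
      rw [Fintype.bijective_iff_injective_and_card]
      exact ⟨Subtype.val_injective, by rw [hcardeq, Fintype.card_fin]⟩
    intro y
    obtain ⟨⟨x, hx⟩, rfl⟩ := hb.2 y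
    exact hx
  have hεid : φ id = id := by
    funext x
    obtain ⟨y, hy⟩ := hsurj x
    calc φ id x = φ id (φ id y) := by rw [hy]
      _ = φ id y := hfix y
      _ = x := hy
  -- φ ⇑σ is bijective for every σ
  have hbij : ∀ σ : Equiv.Perm (Fin n), Function.Bijective (φ ⇑σ) := by
    intro σ
    have h1 := endo_inv_comp hφ σ
    have h2 := endo_inv_comp hφ σ⁻¹
    rw [inv_inv] at h2
    rw [hεid] at h1 h2
    constructor
    · intro u v huv
      have := congrFun h1 u
      simp only [Function.comp_apply, id_eq] at this
      rw [← this, huv]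
      have := congrFun h1 v
      simp only [Function.comp_apply, id_eq] at this
      rw [this]
    · intro y
      refine ⟨φ ⇑σ⁻¹ y, ?_⟩
      have := congrFun h2 y
      simpa using this
  -- the induced map on permutations is surjective, contradiction
  have hFinj : Function.Injective (fun σ : Equiv.Perm (Fin n) =>
      Equiv.ofBijective _ (hbij σ)) := by
    intro σ τ h
    apply hinj
    funext x
    exact Equiv.ext_iff.1 h x
  have hFsurj := Finite.injective_iff_surjective.1 hFinj
  set y0 := φ (fun _ => z0) z0 with hy0def
  have hy0 : ∀ σ : Equiv.Perm (Fin n), φ ⇑σ y0 = y0 := fun σ => congrFun (hE σ) z0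
  set z : Fin n := if y0 = z0 then z1 else z0 with hzdef
  have hz : z ≠ y0 := by
    rw [hzdef]
    split
    · rename_i h; rw [h]; exact hz01.symm
    · rename_i h; exact fun h' => h h'.symm
  obtain ⟨σ, hσ⟩ := hFsurj (Equiv.swap y0 z)
  have : φ ⇑σ y0 = z := by
    have := Equiv.ext_iff.1 hσ y0
    simpa [Equiv.swap_apply_left] using this
  exact hz (by rw [← this, hy0 σ])

end RstarAux
end Ker
section Branch2
open Equiv Function
namespace RstarAux

variable {n : ℕ} {φ : (Fin n → Fin n) → (Fin n → Fin n)}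

lemma sign_const_of_not_perm_inj (hn : 5 ≤ n) (hφ : IsEndo φ)
    (hninj : ¬ ∀ σ τ : Equiv.Perm (Fin n), φ ⇑σ = φ ⇑τ → σ = τ) :
    ∀ σ τ : Equiv.Perm (Fin n), Equiv.Perm.sign σ = Equiv.Perm.sign τ → φ ⇑σ = φ ⇑τ := by
  push_neg at hninj
  obtain ⟨σ0, τ0, heq0, hne0⟩ := hninj
  have hmul : ∀ π ρ : Equiv.Perm (Fin n), φ ⇑(π * ρ) = φ ⇑π ∘ φ ⇑ρ := by
    intro π ρ; rw [Equiv.Perm.coe_mul, hφ]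
  have hone : φ ⇑(1 : Equiv.Perm (Fin n)) = φ id := by rw [Equiv.Perm.coe_one]
  have hIdem : φ id ∘ φ id = φ id := endo_id_left hφ id
  have hNmul : ∀ π ρ : Equiv.Perm (Fin n), φ ⇑π = φ id → φ ⇑ρ = φ id →
      φ ⇑(π * ρ) = φ id := by
    intro π ρ h1 h2; rw [hmul, h1, h2, hIdem]
  have hNinv : ∀ π : Equiv.Perm (Fin n), φ ⇑π = φ id → φ ⇑π⁻¹ = φ id := by
    intro π h
    have h1 : φ ⇑(π * π⁻¹) = φ id := by
      have e : π * π⁻¹ = 1 := by group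
      rw [e, hone]
    rw [hmul, h, endo_id_left hφ] at h1
    exact h1
  have hNconj : ∀ π ρ : Equiv.Perm (Fin n), φ ⇑π = φ id → φ ⇑(ρ * π * ρ⁻¹) = φ id := by
    intro π ρ h
    have e : ρ * π * ρ⁻¹ = ρ * (π * ρ⁻¹) := by group
    have e2 : ρ * ρ⁻¹ = 1 := by group
    rw [e, hmul, hmul, h, endo_id_left hφ, ← hmul, e2, hone]
  set x := σ0 * τ0⁻¹ with hxdef
  have hxN : φ ⇑x = φ id := by
    have e : τ0 * τ0⁻¹ = 1 := by group
    rw [hxdef, hmul, heq0, ← hmul, e, hone]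
  have hx1 : x ≠ 1 := by
    rw [hxdef]; exact fun h => hne0 (by rwa [mul_inv_eq_one] at h)
  obtain ⟨a, ha⟩ : ∃ a, x a ≠ a := by
    by_contra h; push_neg at h; exact hx1 (Equiv.ext h)
  set b := x a with hbdef
  have hba : b ≠ a := ha
  have hcard : 0 < (Finset.univ \ {a, b} : Finset (Fin n)).card := by
    rw [Finset.card_sdiff_of_subset (Finset.subset_univ _)]
    have h2 : ({a, b} : Finset (Fin n)).card ≤ 2 := (Finset.card_insert_le _ _).trans (by simp)
    have hu : (Finset.univ : Finset (Fin n)).card = n := by simp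
    omega
  obtain ⟨c, hc⟩ := Finset.card_pos.mp hcard
  simp only [Finset.mem_sdiff, Finset.mem_univ, true_and, Finset.mem_insert,
    Finset.mem_singleton] at hc
  push_neg at hc
  have hca : c ≠ a := hc.1
  have hcb : c ≠ b := hc.2
  set d := x c with hddef
  have hdb : d ≠ b := by
    rw [hddef, hbdef]; exact fun h => hca (x.injective h)
  -- the commutator of x with (a c) is in N and is a product of two transpositions
  have hyN : φ ⇑(Equiv.swap b d * Equiv.swap a c) = φ id := by
    have h1 := hNinv x hxN
    have h2 := hNconj x⁻¹ (Equiv.swap a c) h1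
    have e : x * Equiv.swap a c * x⁻¹ * (Equiv.swap a c)⁻¹
        = x * (Equiv.swap a c * x⁻¹ * (Equiv.swap a c)⁻¹) := by group
    have h3 : φ ⇑(x * Equiv.swap a c * x⁻¹ * (Equiv.swap a c)⁻¹) = φ id := by
      rw [e]; exact hNmul _ _ hxN h2
    have hy : x * Equiv.swap a c * x⁻¹ * (Equiv.swap a c)⁻¹
        = Equiv.swap b d * Equiv.swap a c := by
      calc x * Equiv.swap a c * x⁻¹ * (Equiv.swap a c)⁻¹
          = (x * Equiv.swap a c * x⁻¹) * Equiv.swap a c := by rw [Equiv.swap_inv]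
        _ = Equiv.swap (x a) (x c) * Equiv.swap a c := by rw [Equiv.swap_apply_apply]
        _ = Equiv.swap b d * Equiv.swap a c := by rw [← hbdef, ← hddef]
    rwa [hy] at h3
  -- there is a three-cycle in N
  have hKey : ∃ w : Equiv.Perm (Fin n), φ ⇑w = φ id ∧ Equiv.Perm.IsThreeCycle w := by
    by_cases hd1 : d = a
    · rw [hd1] at hyN
      exact ⟨_, hyN, by
        rw [Equiv.swap_comm b a]
        exact Equiv.Perm.isThreeCycle_swap_mul_swap_same hba.symm hca.symm hcb.symm⟩
    by_cases hd2 : d = c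
    · rw [hd2] at hyN
      exact ⟨_, hyN, by
        rw [Equiv.swap_comm b c, Equiv.swap_comm a c]
        exact Equiv.Perm.isThreeCycle_swap_mul_swap_same hcb hca hba⟩
    -- double transposition case
    have hcard4 : 0 < (Finset.univ \ {a, b, c, d} : Finset (Fin n)).card := by
      rw [Finset.card_sdiff_of_subset (Finset.subset_univ _)]
      have h1 := Finset.card_insert_le a ({b, c, d} : Finset (Fin n))
      have h2 := Finset.card_insert_le b ({c, d} : Finset (Fin n))
      have h3 := Finset.card_insert_le c ({d} : Finset (Fin n))
      have h4 : ({d} : Finset (Fin n)).card = 1 := Finset.card_singleton d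
      have hu : (Finset.univ : Finset (Fin n)).card = n := by simp
      omega
    obtain ⟨u, hu⟩ := Finset.card_pos.mp hcard4
    simp only [Finset.mem_sdiff, Finset.mem_univ, true_and, Finset.mem_insert,
      Finset.mem_singleton] at hu
    push_neg at hu
    obtain ⟨hua, hub, huc, hud⟩ := hu
    -- commutation facts
    have hdisj1 : (Equiv.swap b d).Disjoint (Equiv.swap u c) := by
      intro z
      by_cases hz : z = b ∨ z = d
      · right
        rcases hz with hz | hz <;> subst hz
        · exact Equiv.swap_apply_of_ne_of_ne (fun h => hub h.symm) hcb.symm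
        · exact Equiv.swap_apply_of_ne_of_ne (fun h => hud h.symm) hd2
      · left
        push_neg at hz
        exact Equiv.swap_apply_of_ne_of_ne hz.1 hz.2
    have hdisj2 : (Equiv.swap b d).Disjoint (Equiv.swap a c) := by
      intro z
      by_cases hz : z = b ∨ z = d
      · right
        rcases hz with hz | hz <;> subst hz
        · exact Equiv.swap_apply_of_ne_of_ne hba hcb.symm
        · exact Equiv.swap_apply_of_ne_of_ne hd1 hd2
      · left
        push_neg at hz
        exact Equiv.swap_apply_of_ne_of_ne hz.1 hz.2
    have hc1 := hdisj1.commute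
    have hc2 := hdisj2.commute
    have hb' : Equiv.swap a u b = b :=
      Equiv.swap_apply_of_ne_of_ne hba (fun h => hub h.symm)
    have hd' : Equiv.swap a u d = d :=
      Equiv.swap_apply_of_ne_of_ne hd1 (fun h => hud h.symm)
    have hc' : Equiv.swap a u c = c :=
      Equiv.swap_apply_of_ne_of_ne hca (fun h => huc h.symm)
    have ha' : Equiv.swap a u a = u := Equiv.swap_apply_left a u
    have hg : Equiv.swap a u * (Equiv.swap b d * Equiv.swap a c) * (Equiv.swap a u)⁻¹
        = Equiv.swap b d * Equiv.swap u c := by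
      have e1 : Equiv.swap a u * (Equiv.swap b d * Equiv.swap a c) * (Equiv.swap a u)⁻¹
          = (Equiv.swap a u * Equiv.swap b d * (Equiv.swap a u)⁻¹) *
            (Equiv.swap a u * Equiv.swap a c * (Equiv.swap a u)⁻¹) := by group
      rw [e1, ← Equiv.swap_apply_apply, ← Equiv.swap_apply_apply, hb', hd', ha', hc']
    have hfinal : Equiv.swap a u * (Equiv.swap b d * Equiv.swap a c) * (Equiv.swap a u)⁻¹ *
        (Equiv.swap b d * Equiv.swap a c)⁻¹ = Equiv.swap c u * Equiv.swap c a := by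
      rw [hg, mul_inv_rev, Equiv.swap_inv, Equiv.swap_inv]
      calc Equiv.swap b d * Equiv.swap u c * (Equiv.swap a c * Equiv.swap b d)
          = (Equiv.swap b d * Equiv.swap u c) * Equiv.swap a c * Equiv.swap b d := by group
        _ = (Equiv.swap u c * Equiv.swap b d) * Equiv.swap a c * Equiv.swap b d := by
            rw [hc1.eq]
        _ = Equiv.swap u c * (Equiv.swap b d * Equiv.swap a c) * Equiv.swap b d := by group
        _ = Equiv.swap u c * (Equiv.swap a c * Equiv.swap b d) * Equiv.swap b d := by
            rw [hc2.eq]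
        _ = (Equiv.swap u c * Equiv.swap a c) * (Equiv.swap b d * Equiv.swap b d) := by group
        _ = Equiv.swap c u * Equiv.swap c a := by
            rw [Equiv.swap_mul_self, mul_one, Equiv.swap_comm u c, Equiv.swap_comm a c]
    have hy'N : φ ⇑(Equiv.swap a u * (Equiv.swap b d * Equiv.swap a c) *
        (Equiv.swap a u)⁻¹ * (Equiv.swap b d * Equiv.swap a c)⁻¹) = φ id :=
      hNmul _ _ (hNconj _ (Equiv.swap a u) hyN) (hNinv _ hyN)
    rw [hfinal] at hy'N
    exact ⟨_, hy'N, Equiv.Perm.isThreeCycle_swap_mul_swap_same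
      (fun h => huc h.symm) hca (fun h => hua h)⟩
  obtain ⟨w, hwN, hw3⟩ := hKey
  -- all three-cycles are in N
  have h3N : ∀ v : Equiv.Perm (Fin n), Equiv.Perm.IsThreeCycle v → φ ⇑v = φ id := by
    intro v hv
    have hconj : IsConj w v := Equiv.Perm.isConj_iff_cycleType_eq.2
      (by rw [hw3.cycleType, hv.cycleType])
    obtain ⟨cph, hcw⟩ := isConj_iff.1 hconj
    rw [← hcw]
    exact hNconj w cph hwN
  -- all even permutations are in N
  have hAN : ∀ v : Equiv.Perm (Fin n), Equiv.Perm.sign v = 1 → φ ⇑v = φ id := by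
    intro v hv
    let N : Subgroup (Equiv.Perm (Fin n)) :=
      { carrier := {π | φ ⇑π = φ id}
        one_mem' := by
          show φ ⇑(1 : Equiv.Perm (Fin n)) = φ id
          rw [Equiv.Perm.coe_one]
        mul_mem' := fun ha hb => hNmul _ _ ha hb
        inv_mem' := fun ha => hNinv _ ha }
    have hvc : v ∈ Subgroup.closure {σ : Equiv.Perm (Fin n) | σ.IsThreeCycle} := by
      rw [Equiv.Perm.closure_three_cycles_eq_alternating]
      exact Equiv.Perm.mem_alternatingGroup.2 hv
    have hle : Subgroup.closure {σ : Equiv.Perm (Fin n) | σ.IsThreeCycle} ≤ N :=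
      (Subgroup.closure_le N).2 (fun σ hσ => h3N σ hσ)
    exact hle hvc
  intro σ τ hsign
  have h1 : Equiv.Perm.sign (σ * τ⁻¹) = 1 := by
    rw [map_mul, map_inv, hsign]
    simp
  have h2 := hAN _ h1
  calc φ ⇑σ = φ ⇑((σ * τ⁻¹) * τ) := by rw [inv_mul_cancel_right]
    _ = φ ⇑(σ * τ⁻¹) ∘ φ ⇑τ := hmul _ _
    _ = φ id ∘ φ ⇑τ := by rw [h2]
    _ = φ ⇑τ := endo_id_left hφ _

end RstarAux
end Branch2
section Collapse
open Equiv Function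
namespace RstarAux

variable {n : ℕ} {φ : (Fin n → Fin n) → (Fin n → Fin n)}

/-- the rank `n-1` idempotent sending `j` to `i` and fixing everything else -/
def eta (i j : Fin n) : Fin n → Fin n := fun x => if x = j then i else x

lemma eta_comp_self {i j : Fin n} (hij : i ≠ j) : eta i j ∘ eta i j = eta i j := by
  funext x
  by_cases hx : x = j
  · simp [eta, hx, if_neg hij]
  · simp [eta, hx]

lemma branch2_values (hn : 5 ≤ n) (hφ : IsEndo φ)
    (hsgn : ∀ σ τ : Equiv.Perm (Fin n),
      Equiv.Perm.sign σ = Equiv.Perm.sign τ → φ ⇑σ = φ ⇑τ) :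
    ∃ t eps f : Fin n → Fin n,
      (∀ s, IsOddPerm s → φ s = t) ∧ (∀ s, IsEvenPerm s → φ s = eps) ∧
      (∀ s, ¬ Function.Bijective s → φ s = f) ∧
      t ∘ f = f ∧ t ∘ t = eps ∧ t ∘ eps = t := by
  obtain ⟨i0, i1, h01⟩ : ∃ i0 i1 : Fin n, i0 ≠ i1 :=
    ⟨⟨0, by omega⟩, ⟨1, by omega⟩, by simp [Fin.ext_iff]⟩
  have hodd : ∀ s, IsOddPerm s → φ s = φ ⇑(Equiv.swap i0 i1) := by
    rintro s ⟨σ, hσ, rfl⟩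
    exact hsgn σ (Equiv.swap i0 i1) (by rw [hσ, Equiv.Perm.sign_swap h01])
  have heven : ∀ s, IsEvenPerm s → φ s = φ id := by
    rintro s ⟨σ, hσ, rfl⟩
    have := hsgn σ 1 (by rw [hσ, map_one])
    rwa [Equiv.Perm.coe_one] at this
  have hswapswap : (⇑(Equiv.swap i0 i1)) ∘ (⇑(Equiv.swap i0 i1)) = (id : Fin n → Fin n) := by
    funext x; simp [Equiv.swap_apply_self]
  have hTT : φ ⇑(Equiv.swap i0 i1) ∘ φ ⇑(Equiv.swap i0 i1) = φ id := by
    rw [← hφ, hswapswap]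
  -- all the rank n-1 idempotents have the same image
  have hetaf : ∀ i j : Fin n, i ≠ j → φ (eta i j) = φ (eta i0 i1) := by
    intro i j hij
    obtain ⟨π, hπs, hπ0, hπ1⟩ := exists_even_perm_pair hn h01 hij
    have hdecomp : eta i j = ⇑π ∘ (eta i0 i1 ∘ ⇑π⁻¹) := by
      funext x
      by_cases hx : x = j
      · have h1 : π⁻¹ j = i1 := by rw [← hπ1]; exact Equiv.symm_apply_apply π i1
        simp [eta, Function.comp, h1, hπ0, hx]
      · have h1 : π⁻¹ x ≠ i1 := by
          intro h; apply hx; rw [← hπ1, ← h]; exact (Equiv.apply_symm_apply π x).symm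
        rw [Equiv.Perm.inv_def] at h1
        simp [eta, Function.comp, if_neg h1, hx, Equiv.apply_symm_apply]
    have hπe : φ ⇑π = φ id := heven _ ⟨π, hπs, rfl⟩
    have hπe' : φ ⇑π⁻¹ = φ id := heven _ ⟨π⁻¹, by rw [map_inv, hπs]; rfl, rfl⟩
    rw [hdecomp, hφ, hφ, hπe, hπe']
    rw [show φ id ∘ (φ (eta i0 i1) ∘ φ id) = (φ id ∘ φ (eta i0 i1)) ∘ φ id from rfl]
    rw [endo_id_left hφ, endo_id_right hφ]
  have hff : φ (eta i0 i1) ∘ φ (eta i0 i1) = φ (eta i0 i1) := by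
    rw [← hφ, eta_comp_self h01]
  have hTF : φ ⇑(Equiv.swap i0 i1) ∘ φ (eta i0 i1) = φ (eta i0 i1) := by
    have hdecomp2 : eta i0 i1 = ⇑(Equiv.swap i0 i1) ∘ eta i1 i0 := by
      funext x
      by_cases hx : x = i1
      · subst hx
        simp [eta, Function.comp, if_neg h01.symm, Equiv.swap_apply_right]
      · by_cases hx0 : x = i0
        · subst hx0
          simp [eta, Function.comp, if_neg h01, Equiv.swap_apply_left]
        · simp [eta, Function.comp, hx, hx0, Equiv.swap_apply_of_ne_of_ne hx0 hx]
    conv_rhs => rw [hdecomp2]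
    rw [hφ, hetaf i1 i0 h01.symm]
  -- every non-bijective map has the same image
  have key : ∀ k : ℕ, ∀ s : Fin n → Fin n, ¬ Function.Bijective s →
      n - (Finset.image s Finset.univ).card ≤ k → φ s = φ (eta i0 i1) := by
    intro k
    induction k with
    | zero =>
      intro s hs hcard
      exfalso
      have hle : (Finset.image s Finset.univ).card ≤ n := by
        have := Finset.card_le_univ (Finset.image s Finset.univ)
        simpa using this
      have heq : (Finset.image s Finset.univ).card = n := by omega
      have huniv : Finset.image s Finset.univ = Finset.univ :=
        Finset.eq_univ_of_card _ (by simpa using heq)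
      have hsurj : Function.Surjective s := by
        intro y
        have : y ∈ Finset.image s Finset.univ := by rw [huniv]; exact Finset.mem_univ y
        obtain ⟨x, -, hx⟩ := Finset.mem_image.1 this
        exact ⟨x, hx⟩
      exact hs ((Finite.surjective_iff_bijective).1 hsurj)
    | succ k ih =>
      intro s hs hcard
      have hninj : ¬ Function.Injective s :=
        fun hinj => hs ((Finite.injective_iff_bijective).1 hinj)
      obtain ⟨i, j, hsij, hij⟩ := Function.not_injective_iff.1 hninj
      have hnsurj : ¬ Function.Surjective s :=
        fun hsurj => hs ((Finite.surjective_iff_bijective).1 hsurj)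
      obtain ⟨m, hm⟩ := not_forall.1 hnsurj
      push_neg at hm
      have hdec : s = Function.update s j m ∘ eta i j := by
        funext x
        by_cases hx : x = j
        · have he : eta i j x = i := by simp [eta, hx]
          show s x = Function.update s j m (eta i j x)
          rw [he, Function.update_of_ne hij, hx]
          exact hsij.symm
        · have he : eta i j x = x := by simp [eta, hx]
          show s x = Function.update s j m (eta i j x)
          rw [he, Function.update_of_ne hx]
      have hφs : φ s = φ (Function.update s j m) ∘ φ (eta i j) := by
        conv_lhs => rw [hdec]
        rw [hφ]
      by_cases hb1 : Function.Bijective (Function.update s j m)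
      · rcases bij_odd_or_even hb1 with ho | he
        · rw [hφs, hodd _ ho, hetaf i j hij, hTF]
        · rw [hφs, heven _ he, hetaf i j hij, endo_id_left hφ]
      · have himg : Finset.image (Function.update s j m) Finset.univ
            = insert m (Finset.image s Finset.univ) := by
          ext y
          simp only [Finset.mem_image, Finset.mem_insert, Finset.mem_univ, true_and]
          constructor
          · rintro ⟨x, rfl⟩
            by_cases hx : x = j
            · subst hx; left; rw [Function.update_self]
            · right; exact ⟨x, (Function.update_of_ne hx _ _).symm ▸ rfl⟩
          · rintro (rfl | ⟨x, rfl⟩)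
            · exact ⟨j, Function.update_self _ _ _⟩
            · by_cases hx : x = j
              · subst hx
                exact ⟨i, by rw [Function.update_of_ne hij, hsij]⟩
              · exact ⟨x, Function.update_of_ne hx _ _⟩
        have hmnot : m ∉ Finset.image s Finset.univ := by
          intro hmem
          obtain ⟨x, -, hx⟩ := Finset.mem_image.1 hmem
          exact hm x hx
        have hcard1 : (Finset.image (Function.update s j m) Finset.univ).card
            = (Finset.image s Finset.univ).card + 1 := by
          rw [himg, Finset.card_insert_of_notMem hmnot]
        have hk : n - (Finset.image (Function.update s j m) Finset.univ).card ≤ k := by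
          omega
        rw [hφs, ih _ hb1 hk, hetaf i j hij, hff]
  have hsing : ∀ s, ¬ Function.Bijective s → φ s = φ (eta i0 i1) :=
    fun s hs => key n s hs (by omega)
  exact ⟨φ ⇑(Equiv.swap i0 i1), φ id, φ (eta i0 i1), hodd, heven, hsing, hTF, hTT,
    endo_id_right hφ _⟩

end RstarAux
end Collapse
section KerClassify
open Equiv Function
namespace RstarAux

variable {n : ℕ} {φ : (Fin n → Fin n) → (Fin n → Fin n)}

lemma ker_classify (hn : 5 ≤ n) (hφ : IsEndo φ) :
    (∀ x y : Fin n → Fin n, φ x = φ y ↔ x = y) ∨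
    (∀ x y : Fin n → Fin n, φ x = φ y ↔
      ((IsOddPerm x ↔ IsOddPerm y) ∧ (IsEvenPerm x ↔ IsEvenPerm y))) ∨
    (∀ x y : Fin n → Fin n, φ x = φ y ↔
      (Function.Bijective x ↔ Function.Bijective y)) ∨
    (∀ x y : Fin n → Fin n, φ x = φ y) := by
  by_cases hinj : ∀ σ τ : Equiv.Perm (Fin n), φ ⇑σ = φ ⇑τ → σ = τ
  · left
    have h := injective_of_perm_inj hn hφ hinj
    exact fun x y => ⟨fun hxy => h hxy, fun h' => by rw [h']⟩
  obtain ⟨t, eps, f, hodd, heven, hsing, hTF, hTT, hTE⟩ :=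
    branch2_values hn hφ (sign_const_of_not_perm_inj hn hφ hinj)
  by_cases hte : t = eps
  · have hval : ∀ x, Function.Bijective x → φ x = eps := by
      intro x hx
      rcases bij_odd_or_even hx with ho | he
      · rw [hodd x ho, hte]
      · exact heven x he
    by_cases hfe : f = eps
    · right; right; right
      intro x y
      have hval' : ∀ x, φ x = eps := by
        intro x
        by_cases hx : Function.Bijective x
        · exact hval x hx
        · rw [hsing x hx, hfe]
      rw [hval' x, hval' y]
    · right; right; left
      intro x y
      constructor
      · intro h
        constructor
        · intro hx
          by_contra hy
          rw [hval x hx, hsing y hy] at h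
          exact hfe h.symm
        · intro hy
          by_contra hx
          rw [hsing x hx, hval y hy] at h
          exact hfe h
      · intro hb
        by_cases hx : Function.Bijective x
        · rw [hval x hx, hval y (hb.1 hx)]
        · have hy : ¬ Function.Bijective y := fun h => hx (hb.2 h)
          rw [hsing x hx, hsing y hy]
  · -- t ≠ eps : the three values are pairwise distinct
    have hfe : f ≠ eps := by
      intro h
      apply hte
      have h1 : t = t ∘ f := by rw [h, hTE]
      rw [h1, hTF, h]
    have hft : f ≠ t := by
      intro h
      apply hfe
      calc f = t ∘ f := hTF.symm
        _ = t ∘ t := by rw [h]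
        _ = eps := hTT
    right; left
    intro x y
    constructor
    · intro h
      by_cases hbx : Function.Bijective x <;> by_cases hby : Function.Bijective y
      · rcases bij_odd_or_even hbx with hox | hex <;> rcases bij_odd_or_even hby with hoy | hey
        · exact ⟨iff_of_true hox hoy,
            iff_of_false (fun he => not_odd_and_even hox he)
              (fun he => not_odd_and_even hoy he)⟩
        · exfalso; apply hte; rw [← hodd x hox, h, heven y hey]
        · exfalso; apply hte; rw [← hodd y hoy, ← h, heven x hex]
        · exact ⟨iff_of_false (fun ho => not_odd_and_even ho hex)
              (fun ho => not_odd_and_even ho hey), iff_of_true hex hey⟩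
      · exfalso
        rcases bij_odd_or_even hbx with hox | hex
        · exact hft (by rw [← hodd x hox, h, hsing y hby])
        · exact hfe (by rw [← heven x hex, h, hsing y hby])
      · exfalso
        rcases bij_odd_or_even hby with hoy | hey
        · exact hft (by rw [← hodd y hoy, ← h, hsing x hbx])
        · exact hfe (by rw [← heven y hey, ← h, hsing x hbx])
      · exact ⟨iff_of_false (nonbij_not_odd hbx) (nonbij_not_odd hby),
          iff_of_false (nonbij_not_even hbx) (nonbij_not_even hby)⟩
    · rintro ⟨ho, he⟩
      by_cases hbx : Function.Bijective x
      · rcases bij_odd_or_even hbx with hox | hex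
        · rw [hodd x hox, hodd y (ho.1 hox)]
        · rw [heven x hex, heven y (he.1 hex)]
      · have hby : ¬ Function.Bijective y := by
          intro hb
          rcases bij_odd_or_even hb with h1 | h1
          · exact nonbij_not_odd hbx (ho.2 h1)
          · exact nonbij_not_even hbx (he.2 h1)
        rw [hsing x hbx, hsing y hby]

end RstarAux
end KerClassify
section Witness
open Equiv Function
namespace RstarAux

variable {n : ℕ}

lemma R1_imp_R2 {x y : Fin n → Fin n}
    (h : (IsOddPerm x ↔ IsOddPerm y) ∧ (IsEvenPerm x ↔ IsEvenPerm y)) :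
    Function.Bijective x ↔ Function.Bijective y := by
  obtain ⟨ho, he⟩ := h
  constructor
  · intro hb
    rcases bij_odd_or_even hb with h1 | h1
    · exact odd_bij (ho.1 h1)
    · exact even_bij (he.1 h1)
  · intro hb
    rcases bij_odd_or_even hb with h1 | h1
    · exact odd_bij (ho.2 h1)
    · exact even_bij (he.2 h1)

lemma id_not_odd : ¬ IsOddPerm (id : Fin n → Fin n) := by
  rintro ⟨σ, hσ, hcoe⟩
  have hσ1 : σ = 1 := Equiv.coe_fn_injective (show ⇑σ = ⇑(1 : Equiv.Perm (Fin n)) by rw [hcoe, Equiv.Perm.coe_one])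
  rw [hσ1, map_one] at hσ
  exact absurd hσ (by decide)

lemma const_nonbij (hn : 5 ≤ n) (a : Fin n) :
    ¬ Function.Bijective (fun _ : Fin n => a) := by
  intro h
  have h01 : (⟨0, by omega⟩ : Fin n) = ⟨1, by omega⟩ := h.1 rfl
  exact absurd h01 (by simp [Fin.ext_iff])

lemma witness1 (hn : 5 ≤ n) : ∃ η ζ : (Fin n → Fin n) → (Fin n → Fin n),
    IsEndo η ∧ IsEndo ζ ∧ (fun x => η (η x)) = η ∧ (fun x => ζ (ζ x)) = ζ ∧
    (∀ s, (IsOddPerm (η s) ↔ IsOddPerm (ζ s)) ∧ (IsEvenPerm (η s) ↔ IsEvenPerm (ζ s))) ∧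
    ¬ (∀ s, η s = ζ s) := by
  obtain ⟨a0, a1, a2, a3, h01, h02, h03, h12, h13, h23⟩ :
      ∃ a0 a1 a2 a3 : Fin n, a0 ≠ a1 ∧ a0 ≠ a2 ∧ a0 ≠ a3 ∧ a1 ≠ a2 ∧ a1 ≠ a3 ∧ a2 ≠ a3 :=
    ⟨⟨0, by omega⟩, ⟨1, by omega⟩, ⟨2, by omega⟩, ⟨3, by omega⟩,
      by simp [Fin.ext_iff], by simp [Fin.ext_iff], by simp [Fin.ext_iff],
      by simp [Fin.ext_iff], by simp [Fin.ext_iff], by simp [Fin.ext_iff]⟩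
  have hswapsq : (⇑(Equiv.swap a0 a1)) ∘ (⇑(Equiv.swap a0 a1)) = (id : Fin n → Fin n) := by
    funext x; simp [Equiv.swap_apply_self]
  have hperm : ∀ a : Fin n, a ≠ a0 → a ≠ a1 →
      Permissible (⇑(Equiv.swap a0 a1)) (fun _ => a) := by
    intro a ha0 ha1
    refine ⟨?_, ?_, rfl, rfl⟩
    · rw [hswapsq, Function.comp_id]
    · funext x
      exact Equiv.swap_apply_of_ne_of_ne ha0 ha1
  have hperm2 := hperm a2 h02.symm h12.symm
  have hperm3 := hperm a3 h03.symm h13.symm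
  have htodd : IsOddPerm (⇑(Equiv.swap a0 a1)) :=
    ⟨Equiv.swap a0 a1, Equiv.Perm.sign_swap h01, rfl⟩
  refine ⟨phi (⇑(Equiv.swap a0 a1)) (fun _ => a2), phi (⇑(Equiv.swap a0 a1)) (fun _ => a3),
    phi_isEndo hperm2, phi_isEndo hperm3,
    phi_idem_of_odd htodd (const_nonbij hn a2), phi_idem_of_odd htodd (const_nonbij hn a3),
    ?_, ?_⟩
  · intro s
    by_cases hb : Function.Bijective s
    · rcases bij_odd_or_even hb with ho | he
      · rw [phi_odd ho, phi_odd ho]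
        exact ⟨Iff.rfl, Iff.rfl⟩
      · rw [phi_even he, phi_even he]
        exact ⟨Iff.rfl, Iff.rfl⟩
    · rw [phi_nonbij hb, phi_nonbij hb]
      exact ⟨iff_of_false (nonbij_not_odd (const_nonbij hn a2))
          (nonbij_not_odd (const_nonbij hn a3)),
        iff_of_false (nonbij_not_even (const_nonbij hn a2))
          (nonbij_not_even (const_nonbij hn a3))⟩
  · intro hall
    have h := hall (fun _ => a2)
    rw [phi_nonbij (const_nonbij hn a2), phi_nonbij (const_nonbij hn a2)] at h
    exact h23 (congrFun h a0)

lemma witness2 (hn : 5 ≤ n) : ∃ η ζ : (Fin n → Fin n) → (Fin n → Fin n),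
    IsEndo η ∧ IsEndo ζ ∧ (fun x => η (η x)) = η ∧ (fun x => ζ (ζ x)) = ζ ∧
    (∀ s, Function.Bijective (η s) ↔ Function.Bijective (ζ s)) ∧
    ¬ (∀ s, (IsOddPerm (η s) ↔ IsOddPerm (ζ s)) ∧ (IsEvenPerm (η s) ↔ IsEvenPerm (ζ s))) := by
  obtain ⟨a0, a1, h01⟩ : ∃ a0 a1 : Fin n, a0 ≠ a1 :=
    ⟨⟨0, by omega⟩, ⟨1, by omega⟩, by simp [Fin.ext_iff]⟩
  have hperm : Permissible (id : Fin n → Fin n) (fun _ => a0) := ⟨rfl, rfl, rfl, rfl⟩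
  refine ⟨fun s => s, phi id (fun _ => a0), fun _ _ => rfl, phi_isEndo hperm, rfl,
    phi_idem_of_id (const_nonbij hn a0), ?_, ?_⟩
  · intro s
    by_cases hb : Function.Bijective s
    · rcases bij_odd_or_even hb with ho | he
      · rw [phi_odd ho]
        exact iff_of_true hb Function.bijective_id
      · rw [phi_even he]
        exact iff_of_true hb (Function.bijective_id.comp Function.bijective_id)
    · rw [phi_nonbij hb]
      exact iff_of_false hb (const_nonbij hn a0)
  · intro hall
    have hsodd : IsOddPerm (⇑(Equiv.swap a0 a1)) :=
      ⟨Equiv.swap a0 a1, Equiv.Perm.sign_swap h01, rfl⟩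
    have h := (hall ⇑(Equiv.swap a0 a1)).1
    rw [phi_odd hsodd] at h
    exact id_not_odd (h.1 hsodd)

lemma witness3 (hn : 5 ≤ n) : ∃ η ζ : (Fin n → Fin n) → (Fin n → Fin n),
    IsEndo η ∧ IsEndo ζ ∧ (fun x => η (η x)) = η ∧ (fun x => ζ (ζ x)) = ζ ∧
    ¬ (∀ s, Function.Bijective (η s) ↔ Function.Bijective (ζ s)) := by
  obtain ⟨a0, -⟩ : ∃ a0 : Fin n, True := ⟨⟨0, by omega⟩, trivial⟩
  refine ⟨fun s => s, fun _ _ => a0, fun _ _ => rfl, fun _ _ => rfl, rfl, rfl, ?_⟩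
  intro hall
  exact const_nonbij hn a0 ((hall id).1 Function.bijective_id)

lemma transfer {α β : (Fin n → Fin n) → (Fin n → Fin n)}
    {R : (Fin n → Fin n) → (Fin n → Fin n) → Prop}
    (hA : ∀ x y, α x = α y ↔ R x y) (hB : ∀ x y, β x = β y ↔ R x y)
    (γ δ : (Fin n → Fin n) → (Fin n → Fin n)) :
    (fun x => α (γ x)) = (fun x => α (δ x)) ↔ (fun x => β (γ x)) = (fun x => β (δ x)) := by
  constructor <;> intro h <;> funext x
  · exact (hB _ _).2 ((hA _ _).1 (congrFun h x))
  · exact (hA _ _).2 ((hB _ _).1 (congrFun h x))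

lemma mismatch_helper {α β : (Fin n → Fin n) → (Fin n → Fin n)}
    {Rs Rb : (Fin n → Fin n) → (Fin n → Fin n) → Prop}
    (hA : ∀ x y, α x = α y ↔ Rs x y) (hB : ∀ x y, β x = β y ↔ Rb x y)
    {η ζ : (Fin n → Fin n) → (Fin n → Fin n)}
    (hη : IsEndo η) (hζ : IsEndo ζ)
    (hiη : (fun x => η (η x)) = η) (hiζ : (fun x => ζ (ζ x)) = ζ)
    (hbig : ∀ s, Rb (η s) (ζ s)) (hsmall : ¬ ∀ s, Rs (η s) (ζ s))
    (hIC : ∀ η ζ : (Fin n → Fin n) → (Fin n → Fin n), IsEndo η → IsEndo ζ →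
      (fun x => η (η x)) = η → (fun x => ζ (ζ x)) = ζ →
      ((fun x => α (η x)) = (fun x => α (ζ x)) ↔
        (fun x => β (η x)) = (fun x => β (ζ x)))) : False := by
  have hβeq : (fun x => β (η x)) = (fun x => β (ζ x)) := funext fun s => (hB _ _).2 (hbig s)
  have hαeq := (hIC η ζ hη hζ hiη hiζ).2 hβeq
  exact hsmall (fun s => (hA _ _).1 (congrFun hαeq s))

end RstarAux
end Witness

open RstarAux in
/-- For `n ≥ 5` and semigroup endomorphisms `α`, `β` of `T_n`, the relation
`α R* β` holds iff the defining condition holds with `γ`, `δ` restricted to idempotents. -/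
theorem Rstar_via_idempotents (n : ℕ) (hn : 5 ≤ n)
    (α β : (Fin n → Fin n) → (Fin n → Fin n)) (hα : IsEndo α) (hβ : IsEndo β) :
    (∀ γ δ : (Fin n → Fin n) → (Fin n → Fin n), IsEndo γ → IsEndo δ →
        ((fun x => α (γ x)) = (fun x => α (δ x)) ↔
          (fun x => β (γ x)) = (fun x => β (δ x)))) ↔
      (∀ η ζ : (Fin n → Fin n) → (Fin n → Fin n), IsEndo η → IsEndo ζ →
        (fun x => η (η x)) = η → (fun x => ζ (ζ x)) = ζ →
        ((fun x => α (η x)) = (fun x => α (ζ x)) ↔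
          (fun x => β (η x)) = (fun x => β (ζ x)))) := by
  constructor
  · intro h η ζ hη hζ _ _
    exact h η ζ hη hζ
  · intro hIC γ δ hγ hδ
    have hICs : ∀ η ζ : (Fin n → Fin n) → (Fin n → Fin n), IsEndo η → IsEndo ζ →
        (fun x => η (η x)) = η → (fun x => ζ (ζ x)) = ζ →
        ((fun x => β (η x)) = (fun x => β (ζ x)) ↔
          (fun x => α (η x)) = (fun x => α (ζ x))) :=
      fun η ζ a b c d => (hIC η ζ a b c d).symm
    obtain ⟨η1, ζ1, he1, hz1, hi1, hj1, hbig1, hsmall1⟩ := witness1 (n := n) hn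
    obtain ⟨η2, ζ2, he2, hz2, hi2, hj2, hbig2, hsmall2⟩ := witness2 (n := n) hn
    obtain ⟨η3, ζ3, he3, hz3, hi3, hj3, hsmall3⟩ := witness3 (n := n) hn
    rcases ker_classify hn hα with hA | hA | hA | hA <;>
      rcases ker_classify hn hβ with hB | hB | hB | hB
    · exact transfer hA hB γ δ
    · exact (mismatch_helper hA hB he1 hz1 hi1 hj1 hbig1 hsmall1 hIC).elim
    · exact (mismatch_helper hA hB he1 hz1 hi1 hj1
        (fun s => R1_imp_R2 (hbig1 s)) hsmall1 hIC).elim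
    · exact (mismatch_helper hA (fun x y => ⟨fun _ => trivial, fun _ => hB x y⟩)
        he1 hz1 hi1 hj1 (fun _ => trivial) hsmall1 hIC).elim
    · exact (mismatch_helper hB hA he1 hz1 hi1 hj1 hbig1 hsmall1 hICs).elim
    · exact transfer hA hB γ δ
    · exact (mismatch_helper hA hB he2 hz2 hi2 hj2 hbig2 hsmall2 hIC).elim
    · exact (mismatch_helper hA (fun x y => ⟨fun _ => trivial, fun _ => hB x y⟩)
        he2 hz2 hi2 hj2 (fun _ => trivial) hsmall2 hIC).elim
    · exact (mismatch_helper hB hA he1 hz1 hi1 hj1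
        (fun s => R1_imp_R2 (hbig1 s)) hsmall1 hICs).elim
    · exact (mismatch_helper hB hA he2 hz2 hi2 hj2 hbig2 hsmall2 hICs).elim
    · exact transfer hA hB γ δ
    · exact (mismatch_helper hA (fun x y => ⟨fun _ => trivial, fun _ => hB x y⟩)
        he3 hz3 hi3 hj3 (fun _ => trivial) hsmall3 hIC).elim
    · exact (mismatch_helper hB (fun x y => ⟨fun _ => trivial, fun _ => hA x y⟩)
        he1 hz1 hi1 hj1 (fun _ => trivial) hsmall1 hICs).elim
    · exact (mismatch_helper hB (fun x y => ⟨fun _ => trivial, fun _ => hA x y⟩)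
        he2 hz2 hi2 hj2 (fun _ => trivial) hsmall2 hICs).elim
    · exact (mismatch_helper hB (fun x y => ⟨fun _ => trivial, fun _ => hA x y⟩)
        he3 hz3 hi3 hj3 (fun _ => trivial) hsmall3 hICs).elim
    · exact transfer (fun x y => ⟨fun _ => trivial, fun _ => hA x y⟩)
        (fun x y => ⟨fun _ => trivial, fun _ => hB x y⟩) γ δ
end
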